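/- arXiv:2202.00387 — 4 statements merged into one kernel-verified Lean document; each statement's English description precedes it below -/
import Mathlib

section
/- Let {ℋ; ℰ; 𝒟_ℰ} be a quantized domain in a Hilbert space ℋ and let T ∈ C*(𝒟_ℰ). Then 𝒟_ℰ is contained in the domain of the Hilbert-space adjoint T★ of the densely defined operator T, and the restriction T★|_{𝒟_ℰ} again belongs to C*(𝒟_ℰ). Moreover, with the involution T* := T★|_{𝒟_ℰ}, C*(𝒟_ℰ) is a unital *-algebra. -/
open scoped ComplexOrder

noncomputable section

/-! ### Locally C*-algebras -/

/-- A C*-seminorm on a complex *-algebra: a submultiplicative *-invariant seminorm `p`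
with `p (a* a) = (p a)²`. -/
structure IsCStarSeminorm {A : Type*} [Ring A] [StarRing A] [Algebra ℂ A] (p : A → ℝ) :
    Prop where
  nonneg : ∀ a, 0 ≤ p a
  map_smul : ∀ (c : ℂ) (a : A), p (c • a) = ‖c‖ * p a
  add_le : ∀ a b, p (a + b) ≤ p a + p b
  mul_le : ∀ a b, p (a * b) ≤ p a * p b
  map_star : ∀ a, p (star a) = p a
  cstar : ∀ a, p (star a * a) = p a ^ 2

/-- The `Seminorm` associated with a C*-seminorm. -/
def IsCStarSeminorm.toSeminorm {A : Type*} [Ring A] [StarRing A] [Algebra ℂ A] {p : A → ℝ}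
    (h : IsCStarSeminorm p) : Seminorm ℂ A where
  toFun := p
  map_zero' := by simpa using h.map_smul 0 0
  add_le' := h.add_le
  neg' := fun a => by simpa using h.map_smul (-1) a
  smul' := h.map_smul

/-- `A` (a complete Hausdorff topological complex `*`-algebra) is a locally C*-algebra whose
topology is determined by the upward filtered family `p = {p_λ}_{λ ∈ Λ}` of C*-seminorms. -/
structure IsLocallyCStarAlgebra {A : Type*} {Λ : Type*} [Ring A] [StarRing A] [Algebra ℂ A]
    [StarModule ℂ A] [Nonempty Λ] [UniformSpace A] [IsUniformAddGroup A] (p : Λ → A → ℝ) :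
    Prop where
  cstarSeminorm : ∀ l, IsCStarSeminorm (p l)
  directed : ∀ l₁ l₂ : Λ, ∃ l₃, (∀ a, p l₁ a ≤ p l₃ a) ∧ (∀ a, p l₂ a ≤ p l₃ a)
  separating : ∀ a : A, (∀ l, p l a = 0) → a = 0
  withSeminorms : WithSeminorms (fun l => (cstarSeminorm l).toSeminorm)
  complete : CompleteSpace A

/-- The data of the induced C*-seminorms `p_λ^k` on the matrix algebras `M_k(A)`:
`pk k l` is a C*-seminorm on `M_k(A)` restricting to `p l` for `k = 1` and whose kernel is
`M_k(ker p_λ)` (these properties determine `p_λ^k` uniquely, `M_k(A_λ)` being a C*-algebra). -/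
structure IsMatrixCStarSeminormFamily {A : Type*} {Λ : Type*} [Ring A] [StarRing A]
    [Algebra ℂ A] (p : Λ → A → ℝ) (pk : ∀ k : ℕ, Λ → Matrix (Fin k) (Fin k) A → ℝ) :
    Prop where
  cstarSeminorm : ∀ k l, IsCStarSeminorm (pk k l)
  compat : ∀ l (M : Matrix (Fin 1) (Fin 1) A), pk 1 l M = p l (M 0 0)
  ker : ∀ k l (M : Matrix (Fin k) (Fin k) A), pk k l M = 0 ↔ ∀ i j, p l (M i j) = 0

/-- `a` is `λ`-positive (`a ≥_λ 0`) w.r.t. the C*-seminorm `p = p_λ`: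
`a = b* b + c` for some `b, c` with `p_λ c = 0`. -/
def LocalPositive {A : Type*} [Ring A] [StarRing A] (p : A → ℝ) (a : A) : Prop :=
  ∃ b c, p c = 0 ∧ a = star b * b + c

/-! ### Quantized domains and `C*(𝒟_ℰ)` -/

section Hilbert

variable {H : Type*} [NormedAddCommGroup H] [InnerProductSpace ℂ H]

/-- A quantized domain in a Hilbert space `H`: an upward filtered family of closed subspaces
whose union `𝒟_ℰ` is dense in `H`. -/
structure IsQuantizedDomain {ι : Type*} (E : ι → Submodule ℂ H) : Prop where
  closed : ∀ i, IsClosed (E i : Set H)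
  directed : Directed (· ≤ ·) E
  dense : Dense (⋃ i, (E i : Set H))

/-- A quantized Fréchet domain in a Hilbert space `H`: an increasing sequence of closed
subspaces whose union `𝒟_ℰ` is dense in `H`. -/
structure IsQuantizedFrechetDomain (E : ℕ → Submodule ℂ H) : Prop where
  closed : ∀ n, IsClosed (E n : Set H)
  mono : Monotone E
  dense : Dense (⋃ n, (E n : Set H))

/-- The inclusion of `ℋ_i` into the union space `𝒟_ℰ = ⋃ i, ℋ_i` (realized as `⨆ i, E i`). -/
def inclE {ι : Type*} (E : ι → Submodule ℂ H) (i : ι) (x : H) (hx : x ∈ E i) :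
    ↥(⨆ j, E j) := ⟨x, le_iSup E i hx⟩

/-- Membership in `C*(𝒟_ℰ)` for a linear operator `T` on the union space `𝒟_ℰ`, via the
characterization: every `ℋ_i` is `T`-invariant, every `ℋ_i^⊥ ∩ 𝒟_ℰ` is `T`-invariant, and
the restriction of `T` to every `ℋ_i` is bounded. -/
def MemCStar {ι : Type*} (E : ι → Submodule ℂ H)
    (T : ↥(⨆ i, E i) →ₗ[ℂ] ↥(⨆ i, E i)) : Prop :=
  ∀ i, (∀ x : ↥(⨆ j, E j), (x : H) ∈ E i → ((T x : H) ∈ E i)) ∧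
    (∀ x : ↥(⨆ j, E j), (x : H) ∈ (E i)ᗮ → ((T x : H) ∈ (E i)ᗮ)) ∧
    ∃ C : ℝ, ∀ x : ↥(⨆ j, E j), (x : H) ∈ E i → ‖(T x : H)‖ ≤ C * ‖x‖

/-- `S` is (the restriction to `𝒟_ℰ` of) the adjoint of `T`:
`⟪T x, y⟫ = ⟪x, S y⟫` for all `x, y ∈ 𝒟_ℰ`. -/
def IsAdjointOn {ι : Type*} (E : ι → Submodule ℂ H)
    (T S : ↥(⨆ i, E i) →ₗ[ℂ] ↥(⨆ i, E i)) : Prop :=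
  ∀ x y : ↥(⨆ i, E i), (inner ℂ ((T x : H)) ((y : H)) : ℂ) = inner ℂ ((x : H)) ((S y : H))

/-- The norm `‖T‖_i = ‖T|_{ℋ_i}‖ = sup {‖T x‖ : x ∈ ℋ_i, ‖x‖ ≤ 1}` of the restriction of
`T` to `ℋ_i`. -/
def restrictedNorm {ι : Type*} (E : ι → Submodule ℂ H) (i : ι)
    (T : ↥(⨆ j, E j) →ₗ[ℂ] ↥(⨆ j, E j)) : ℝ :=
  sSup ((fun x : ↥(⨆ j, E j) => ‖(T x : H)‖) '' {x | (x : H) ∈ E i ∧ ‖(x : H)‖ ≤ 1})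

section Complete

variable [CompleteSpace H]

/-- The orthogonal projection onto a closed subspace `K`, as an operator `H → H`. -/
def projCL (K : Submodule ℂ H) (hK : IsClosed (K : Set H)) : H →L[ℂ] H :=
  haveI : CompleteSpace K := hK.completeSpace_coe
  K.subtypeL.comp (K.orthogonalProjectionOnto)

theorem projCL_mem (K : Submodule ℂ H) (hK : IsClosed (K : Set H)) (x : H) :
    projCL K hK x ∈ K := by
  haveI : CompleteSpace K := hK.completeSpace_coe
  exact (K.orthogonalProjectionOnto x).2

/-- The orthogonal projection `P_i` of `H` onto `ℋ_i`, viewed as a map into `𝒟_ℰ`. -/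
def projD {ι : Type*} (E : ι → Submodule ℂ H) (hcl : ∀ i, IsClosed ((E i : Set H))) (i : ι)
    (x : H) : ↥(⨆ j, E j) :=
  inclE E i (projCL (E i) (hcl i) x) (projCL_mem _ _ _)

end Complete

/-! ### Local completely positive / completely contractive maps -/

variable {B : Type*} [Ring B] [StarRing B] [Algebra ℂ B] {Λ : Type*}

/-- `φ`, defined on the subspace `S` of `B` and with values in `C*(𝒟_ℰ)`, is local completely
positive: for every `n` there is `λ` such that for every `k`, the `k`-amplification
`φ⁽ᵏ⁾([a_ij]) = [φ(a_ij)]` restricted to `ℋ_n^k` is a positive operator whenever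
`[a_ij] ≥_λ 0`, and vanishes whenever `p_λ^k([a_ij]) = 0`. -/
def IsLocalCPOn {H : Type*} [NormedAddCommGroup H] [InnerProductSpace ℂ H] {ι : Type*}
    (pk : ∀ k : ℕ, Λ → Matrix (Fin k) (Fin k) B → ℝ)
    (E : ι → Submodule ℂ H) (S : Submodule ℂ B)
    (φ : ↥S →ₗ[ℂ] (↥(⨆ n, E n) →ₗ[ℂ] ↥(⨆ n, E n))) : Prop :=
  ∀ n : ι, ∃ l : Λ, ∀ (k : ℕ) (M : Matrix (Fin k) (Fin k) B) (hM : ∀ i j, M i j ∈ S),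
    (LocalPositive (pk k l) M →
      ∀ (ξ : Fin k → H) (hξ : ∀ i, ξ i ∈ E n),
        0 ≤ ∑ i, ∑ j, (inner ℂ (ξ i) ((φ ⟨M i j, hM i j⟩ (inclE E n (ξ j) (hξ j)) : H)) : ℂ)) ∧
    (pk k l M = 0 → ∀ (i j : Fin k) (x : H) (hx : x ∈ E n),
      (φ ⟨M i j, hM i j⟩ (inclE E n x hx) : H) = 0)

/-- `φ : B → C*(𝒟_ℰ)` is local completely positive. -/
def IsLocalCP {H : Type*} [NormedAddCommGroup H] [InnerProductSpace ℂ H] {ι : Type*}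
    (pk : ∀ k : ℕ, Λ → Matrix (Fin k) (Fin k) B → ℝ)
    (E : ι → Submodule ℂ H)
    (φ : B →ₗ[ℂ] (↥(⨆ n, E n) →ₗ[ℂ] ↥(⨆ n, E n))) : Prop :=
  ∀ n : ι, ∃ l : Λ, ∀ (k : ℕ) (M : Matrix (Fin k) (Fin k) B),
    (LocalPositive (pk k l) M →
      ∀ (ξ : Fin k → H) (hξ : ∀ i, ξ i ∈ E n),
        0 ≤ ∑ i, ∑ j, (inner ℂ (ξ i) ((φ (M i j) (inclE E n (ξ j) (hξ j)) : H)) : ℂ)) ∧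
    (pk k l M = 0 → ∀ (i j : Fin k) (x : H) (hx : x ∈ E n),
      (φ (M i j) (inclE E n x hx) : H) = 0)

/-- `φ`, defined on the subspace `S` of `B` and with values in `C*(𝒟_ℰ)`, is local completely
contractive: for every `n` there is `λ` such that
`‖φ⁽ᵏ⁾([a_ij])|_{ℋ_n^k}‖ ≤ p_λ^k([a_ij])` for every `k` and every `[a_ij] ∈ M_k` with entries
in `S` (expressed via `‖φ⁽ᵏ⁾([a_ij]) ξ‖² ≤ p_λ^k([a_ij])² ‖ξ‖²` for `ξ ∈ ℋ_n^k`). -/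
def IsLocalCCOn {H : Type*} [NormedAddCommGroup H] [InnerProductSpace ℂ H] {ι : Type*}
    (pk : ∀ k : ℕ, Λ → Matrix (Fin k) (Fin k) B → ℝ)
    (E : ι → Submodule ℂ H) (S : Submodule ℂ B)
    (φ : ↥S →ₗ[ℂ] (↥(⨆ n, E n) →ₗ[ℂ] ↥(⨆ n, E n))) : Prop :=
  ∀ n : ι, ∃ l : Λ, ∀ (k : ℕ) (M : Matrix (Fin k) (Fin k) B) (hM : ∀ i j, M i j ∈ S),
    ∀ (ξ : Fin k → H) (hξ : ∀ i, ξ i ∈ E n),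
      ∑ i, ‖∑ j, (φ ⟨M i j, hM i j⟩ (inclE E n (ξ j) (hξ j)) : H)‖ ^ 2 ≤
        pk k l M ^ 2 * ∑ j, ‖ξ j‖ ^ 2

/-- `φ : B → C*(𝒟_ℰ)` is local completely contractive. -/
def IsLocalCC {H : Type*} [NormedAddCommGroup H] [InnerProductSpace ℂ H] {ι : Type*}
    (pk : ∀ k : ℕ, Λ → Matrix (Fin k) (Fin k) B → ℝ)
    (E : ι → Submodule ℂ H)
    (φ : B →ₗ[ℂ] (↥(⨆ n, E n) →ₗ[ℂ] ↥(⨆ n, E n))) : Prop :=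
  ∀ n : ι, ∃ l : Λ, ∀ (k : ℕ) (M : Matrix (Fin k) (Fin k) B),
    ∀ (ξ : Fin k → H) (hξ : ∀ i, ξ i ∈ E n),
      ∑ i, ‖∑ j, (φ (M i j) (inclE E n (ξ j) (hξ j)) : H)‖ ^ 2 ≤
        pk k l M ^ 2 * ∑ j, ‖ξ j‖ ^ 2

/-- `φ`, defined on the subspace `S` of `B` and with values in `B(H)`, is local completely
positive (w.r.t. the trivial quantized domain `ℰ = {H}`, for which `C*(𝒟_ℰ) = B(H)`). -/
def IsLocalCPBOn {H : Type*} [NormedAddCommGroup H] [InnerProductSpace ℂ H]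
    (pk : ∀ k : ℕ, Λ → Matrix (Fin k) (Fin k) B → ℝ)
    (S : Submodule ℂ B) (φ : ↥S →ₗ[ℂ] (H →L[ℂ] H)) : Prop :=
  ∃ l : Λ, ∀ (k : ℕ) (M : Matrix (Fin k) (Fin k) B) (hM : ∀ i j, M i j ∈ S),
    (LocalPositive (pk k l) M →
      ∀ ξ : Fin k → H, 0 ≤ ∑ i, ∑ j, (inner ℂ (ξ i) (φ ⟨M i j, hM i j⟩ (ξ j)) : ℂ)) ∧
    (pk k l M = 0 → ∀ i j, φ ⟨M i j, hM i j⟩ = 0)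

/-- `φ : B → B(H)` is local completely positive (w.r.t. the trivial quantized domain
`ℰ = {H}`). -/
def IsLocalCPB {H : Type*} [NormedAddCommGroup H] [InnerProductSpace ℂ H]
    (pk : ∀ k : ℕ, Λ → Matrix (Fin k) (Fin k) B → ℝ)
    (φ : B →ₗ[ℂ] (H →L[ℂ] H)) : Prop :=
  ∃ l : Λ, ∀ (k : ℕ) (M : Matrix (Fin k) (Fin k) B),
    (LocalPositive (pk k l) M →
      ∀ ξ : Fin k → H, 0 ≤ ∑ i, ∑ j, (inner ℂ (ξ i) (φ (M i j) (ξ j)) : ℂ)) ∧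
    (pk k l M = 0 → ∀ i j, φ (M i j) = 0)

end Hilbert

/-! ### The `2 × 2` constructions -/

section Two

variable {H : Type*} [NormedAddCommGroup H] [InnerProductSpace ℂ H]

/-- The quantized domain `ℰ ⊕ ℰ = {ℋ_n ⊕ ℋ_n}` in `H ⊕ H` (modeled as `PiLp 2` over
`Fin 2`). -/
def E2 {ι : Type*} (E : ι → Submodule ℂ H) (n : ι) : Submodule ℂ (PiLp 2 fun _ : Fin 2 => H) where
  carrier := {v | ∀ j, v j ∈ E n}
  add_mem' := fun hv hw j => (E n).add_mem (hv j) (hw j)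
  zero_mem' := fun _ => (E n).zero_mem
  smul_mem' := fun c _ hv j => (E n).smul_mem c (hv j)

theorem E2_directed {ι : Type*} {E : ι → Submodule ℂ H} (hE : Directed (· ≤ ·) E) :
    Directed (· ≤ ·) (E2 E) := fun i j =>
  let ⟨k, h1, h2⟩ := hE i j
  ⟨k, fun _ hv l => h1 (hv l), fun _ hv l => h2 (hv l)⟩

/-- The `j`-th component map `𝒟_{ℰ⊕ℰ} → 𝒟_ℰ`. -/
def cmpD {ι : Type*} [Nonempty ι] (E : ι → Submodule ℂ H) (hE : Directed (· ≤ ·) E)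
    (j : Fin 2) : ↥(⨆ n, E2 E n) →ₗ[ℂ] ↥(⨆ n, E n) where
  toFun v := ⟨(v : PiLp 2 fun _ : Fin 2 => H) j, by
    obtain ⟨n, hn⟩ := (Submodule.mem_iSup_of_directed _ (E2_directed hE)).mp v.2
    exact le_iSup E n (hn j)⟩
  map_add' v w := Subtype.ext rfl
  map_smul' c v := Subtype.ext rfl

end Two

section Mat2

variable {A : Type*} [Ring A] [StarRing A] [Algebra ℂ A] {Λ : Type*}

/-- The canonical identification of `M_k(M₂(A))` with `M_{2k}(A)`. -/
def matFlatten (k : ℕ) (X : Matrix (Fin k) (Fin k) (Matrix (Fin 2) (Fin 2) A)) :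
    Matrix (Fin (k * 2)) (Fin (k * 2)) A :=
  Matrix.of fun i j =>
    X (finProdFinEquiv.symm i).1 (finProdFinEquiv.symm j).1
      (finProdFinEquiv.symm i).2 (finProdFinEquiv.symm j).2

/-- The C*-seminorms `p_λ^k` on the matrix algebras `M_k(M₂(A))`, obtained from the
C*-seminorms `p_λ^{2k}` on `M_{2k}(A)` via the canonical identification. -/
def pk2 (pk : ∀ k : ℕ, Λ → Matrix (Fin k) (Fin k) A → ℝ) (k : ℕ) (l : Λ)
    (X : Matrix (Fin k) (Fin k) (Matrix (Fin 2) (Fin 2) A)) : ℝ :=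
  pk (k * 2) l (matFlatten k X)

variable [StarModule ℂ A]

/-- The local operator system `S_M ⊆ M₂(A)` associated with a local operator space `M ⊆ A`:
all matrices `[[α·1, a], [b*, β·1]]` with `α, β ∈ ℂ` and `a, b ∈ M`. -/
def SM (M : Submodule ℂ A) : Submodule ℂ (Matrix (Fin 2) (Fin 2) A) where
  carrier := {X | X 0 0 ∈ Submodule.span ℂ ({1} : Set A) ∧
    X 1 1 ∈ Submodule.span ℂ ({1} : Set A) ∧ X 0 1 ∈ M ∧ star (X 1 0) ∈ M}
  add_mem' := fun {X Y} hX hY =>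
    ⟨add_mem hX.1 hY.1, add_mem hX.2.1 hY.2.1, add_mem hX.2.2.1 hY.2.2.1, by
      rw [Matrix.add_apply, star_add]; exact add_mem hX.2.2.2 hY.2.2.2⟩
  zero_mem' := ⟨zero_mem _, zero_mem _, zero_mem _, by
    rw [Matrix.zero_apply, star_zero]; exact zero_mem _⟩
  smul_mem' := fun c X hX =>
    ⟨Submodule.smul_mem _ c hX.1, Submodule.smul_mem _ c hX.2.1,
      Submodule.smul_mem _ c hX.2.2.1, by
      rw [Matrix.smul_apply, star_smul]; exact Submodule.smul_mem _ _ hX.2.2.2⟩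

end Mat2

/-- A linear operator on `𝒟_ℰ`, viewed as a densely defined (partial) linear operator
on `H`. -/
def toPMap {H : Type*} [NormedAddCommGroup H] [InnerProductSpace ℂ H] {ι : Type*}
    (E : ι → Submodule ℂ H) (T : ↥(⨆ i, E i) →ₗ[ℂ] ↥(⨆ i, E i)) : H →ₗ.[ℂ] H :=
  ⟨⨆ i, E i, (⨆ i, E i).subtype ∘ₗ T⟩


/-! ### Auxiliary lemmas for Statement 2 -/

section Aux2

variable {H : Type*} [NormedAddCommGroup H] [InnerProductSpace ℂ H]
  [CompleteSpace H] {ι : Type*} [Nonempty ι] {E : ι → Submodule ℂ H}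

local notation "⟪" x ", " y "⟫" => @inner ℂ _ _ x y

theorem aux_denseD (hE : IsQuantizedDomain E) :
    Dense (((⨆ i, E i : Submodule ℂ H) : Set H)) :=
  hE.dense.mono (Set.iUnion_subset fun i x hx => le_iSup E i hx)

theorem aux_sep (hE : IsQuantizedDomain E) {z z' : H}
    (h : ∀ x : ↥(⨆ i, E i), ⟪(x : H), z⟫ = ⟪(x : H), z'⟫) : z = z' :=
  (aux_denseD hE).eq_of_inner_right ℂ (fun v hv => h ⟨v, hv⟩)

theorem aux_projD_coe (hcl : ∀ i, IsClosed ((E i : Set H))) (i : ι) (x : H) :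
    ((projD E hcl i x : ↥(⨆ j, E j)) : H) = projCL (E i) (hcl i) x := rfl

/-- Reduction: for `y ∈ ℋ_i`, `⟪T x, y⟫ = ⟪T (P_i x), y⟫`. -/
theorem aux_inner_reduce (hE : IsQuantizedDomain E)
    (T : ↥(⨆ i, E i) →ₗ[ℂ] ↥(⨆ i, E i)) (hT : MemCStar E T)
    (i : ι) (x : ↥(⨆ j, E j)) {y : H} (hy : y ∈ E i) :
    ⟪((T x : H)), y⟫ = ⟪((T (projD E hE.closed i (x : H)) : H)), y⟫ := by
  haveI : CompleteSpace (E i) := (hE.closed i).completeSpace_coe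
  set p : ↥(⨆ j, E j) := projD E hE.closed i (x : H) with hp
  have hq : ((x - p : ↥(⨆ j, E j)) : H) ∈ (E i)ᗮ := by
    have := Submodule.sub_starProjection_mem_orthogonal (K := E i) (x : H)
    simpa [hp, aux_projD_coe, projCL] using this
  have hTq : ((T (x - p) : H)) ∈ (E i)ᗮ := (hT i).2.1 _ hq
  have h0 : ⟪((T (x - p) : H)), y⟫ = 0 :=
    (Submodule.mem_orthogonal' _ _).1 hTq y hy
  have hx : x = p + (x - p) := by abel
  calc ⟪((T x : H)), y⟫ = ⟪((T (p + (x - p)) : H)), y⟫ := by rw [← hx]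
    _ = ⟪((T p : H)) + ((T (x - p) : H)), y⟫ := by rw [map_add]; rfl
    _ = ⟪((T p : H)), y⟫ + ⟪((T (x - p) : H)), y⟫ := inner_add_left _ _ _
    _ = ⟪((T p : H)), y⟫ := by rw [h0, add_zero]

/-- Existence of the adjoint vector for `y ∈ ℋ_i`. -/
theorem aux_exists_adj_of_mem (hE : IsQuantizedDomain E)
    (T : ↥(⨆ i, E i) →ₗ[ℂ] ↥(⨆ i, E i)) (hT : MemCStar E T)
    (i : ι) {y : H} (hy : y ∈ E i) :
    ∃ z : H, z ∈ E i ∧ ∀ x : ↥(⨆ j, E j), ⟪((T x : H)), y⟫ = ⟪(x : H), z⟫ := by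
  haveI : CompleteSpace (E i) := (hE.closed i).completeSpace_coe
  obtain ⟨C, hC⟩ := (hT i).2.2
  -- the bounded operator `x ↦ T (P_i x)`
  have hadd : ∀ u v : H, projD E hE.closed i (u + v) =
      projD E hE.closed i u + projD E hE.closed i v := fun u v =>
    Subtype.ext (by simp [aux_projD_coe, map_add])
  have hsmul : ∀ (c : ℂ) (u : H), projD E hE.closed i (c • u) =
      c • projD E hE.closed i u := fun c u =>
    Subtype.ext (by simp [aux_projD_coe, map_smul])
  set Blm : H →ₗ[ℂ] H :=
    { toFun := fun u => ((T (projD E hE.closed i u) : H))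
      map_add' := fun u v => by simp only [hadd, map_add, Submodule.coe_add]
      map_smul' := fun c u => by simp only [hsmul, map_smul, RingHom.id_apply, Submodule.coe_smul] } with hBlm
  have hPmem : ∀ u : H, ((projD E hE.closed i u : ↥(⨆ j, E j)) : H) ∈ E i := fun u =>
    projCL_mem _ _ _
  have hPnorm : ∀ u : H, ‖((projD E hE.closed i u : ↥(⨆ j, E j)) : H)‖ ≤ ‖u‖ := by
    intro u
    rw [aux_projD_coe]
    calc ‖projCL (E i) (hE.closed i) u‖ = ‖((E i).orthogonalProjectionOnto u : H)‖ := rfl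
      _ = ‖(E i).orthogonalProjectionOnto u‖ := rfl
      _ ≤ ‖(E i).orthogonalProjectionOnto‖ * ‖u‖ := ((E i).orthogonalProjectionOnto).le_opNorm u
      _ ≤ 1 * ‖u‖ :=
          mul_le_mul_of_nonneg_right (Submodule.orthogonalProjectionOnto_norm_le (K := E i)) (norm_nonneg u)
      _ = ‖u‖ := one_mul _
  have hbound : ∀ u : H, ‖Blm u‖ ≤ max C 0 * ‖u‖ := by
    intro u
    have h1 : ‖((T (projD E hE.closed i u) : H))‖ ≤
        C * ‖((projD E hE.closed i u : ↥(⨆ j, E j)) : H)‖ := hC _ (hPmem u)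
    have h2 := hPnorm u
    have h3 : (0:ℝ) ≤ ‖((T (projD E hE.closed i u) : H))‖ := norm_nonneg _
    have h4 : (0:ℝ) ≤ ‖((projD E hE.closed i u : ↥(⨆ j, E j)) : H)‖ := norm_nonneg _
    have h5 : C ≤ max C 0 := le_max_left _ _
    have h6 : (0:ℝ) ≤ max C 0 := le_max_right _ _
    calc ‖Blm u‖ = ‖((T (projD E hE.closed i u) : H))‖ := rfl
      _ ≤ C * ‖((projD E hE.closed i u : ↥(⨆ j, E j)) : H)‖ := h1
      _ ≤ max C 0 * ‖((projD E hE.closed i u : ↥(⨆ j, E j)) : H)‖ := by gcongr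
      _ ≤ max C 0 * ‖u‖ := by gcongr
  set B : H →L[ℂ] H := Blm.mkContinuous (max C 0) hbound with hB
  have hBapp : ∀ u : H, B u = ((T (projD E hE.closed i u) : H)) := fun u => rfl
  set z : H := ContinuousLinearMap.adjoint B y with hz
  have hrel : ∀ x : ↥(⨆ j, E j), ⟪((T x : H)), y⟫ = ⟪(x : H), z⟫ := by
    intro x
    rw [aux_inner_reduce hE T hT i x hy, hz,
      ContinuousLinearMap.adjoint_inner_right, hBapp]
  refine ⟨z, ?_, hrel⟩
  -- `z ∈ ℋ_i`
  rw [← Submodule.orthogonal_orthogonal (E i)]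
  rw [Submodule.mem_orthogonal]
  intro u hu
  rw [hz, ContinuousLinearMap.adjoint_inner_right, hBapp]
  have : projD E hE.closed i u = 0 := by
    apply Subtype.ext
    rw [aux_projD_coe]
    show (((E i).orthogonalProjectionOnto u : ↥(E i)) : H) = ((0 : ↥(⨆ j, E j)) : H)
    rw [Submodule.orthogonalProjectionOnto_apply_of_mem_orthogonal hu]
    rfl
  rw [this, map_zero]
  simp

/-- Existence (and coherence) of the adjoint vector for `y ∈ 𝒟_ℰ`. -/
theorem aux_exists_adj (hE : IsQuantizedDomain E)
    (T : ↥(⨆ i, E i) →ₗ[ℂ] ↥(⨆ i, E i)) (hT : MemCStar E T) (y : ↥(⨆ j, E j)) :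
    ∃ z : ↥(⨆ j, E j), ∀ x : ↥(⨆ j, E j), ⟪((T x : H)), (y : H)⟫ = ⟪(x : H), (z : H)⟫ := by
  obtain ⟨i, hi⟩ := (Submodule.mem_iSup_of_directed E hE.directed).mp y.2
  obtain ⟨z, hz, hrel⟩ := aux_exists_adj_of_mem hE T hT i hi
  exact ⟨⟨z, le_iSup E i hz⟩, hrel⟩

/-- If `S` is a formal adjoint (on `𝒟_ℰ`) of `T ∈ C*(𝒟_ℰ)`, then `S ∈ C*(𝒟_ℰ)`. -/
theorem aux_memCStar_of_isAdjointOn (hE : IsQuantizedDomain E)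
    {T S : ↥(⨆ i, E i) →ₗ[ℂ] ↥(⨆ i, E i)} (hT : MemCStar E T)
    (hadj : IsAdjointOn E T S) : MemCStar E S := by
  intro i
  haveI : CompleteSpace (E i) := (hE.closed i).completeSpace_coe
  obtain ⟨C, hC⟩ := (hT i).2.2
  have hmem : ∀ y : ↥(⨆ j, E j), (y : H) ∈ E i → ((S y : H)) ∈ E i := by
    intro y hy
    set p : ↥(⨆ j, E j) := projD E hE.closed i ((S y : H)) with hp
    set r : ↥(⨆ j, E j) := S y - p with hr
    have hrmem : ((r : H)) ∈ (E i)ᗮ := by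
      have := Submodule.sub_starProjection_mem_orthogonal (K := E i) ((S y : H))
      simpa [hr, hp, aux_projD_coe, projCL] using this
    have hTr : ((T r : H)) ∈ (E i)ᗮ := (hT i).2.1 _ hrmem
    have h1 : ⟪((r : H)), ((S y : H))⟫ = 0 := by
      rw [← hadj r y]
      exact (Submodule.mem_orthogonal' _ _).1 hTr _ hy
    have h2 : ⟪((r : H)), ((p : H))⟫ = 0 :=
      (Submodule.mem_orthogonal' _ _).1 hrmem _ (projCL_mem _ _ _)
    have h3 : ⟪((r : H)), ((r : H))⟫ = 0 := by
      have : ((r : H)) = ((S y : H)) - ((p : H)) := rfl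
      rw [show (⟪((r : H)), ((r : H))⟫ : ℂ) =
          ⟪((r : H)), ((S y : H))⟫ - ⟪((r : H)), ((p : H))⟫ by
        rw [← inner_sub_right]; rfl, h1, h2, sub_zero]
    have hr0 : ((r : H)) = 0 := inner_self_eq_zero.mp h3
    have : ((S y : H)) = ((p : H)) + ((r : H)) := by
      rw [hr]; push_cast [Submodule.coe_sub]; abel
    rw [this, hr0, add_zero]
    exact projCL_mem _ _ _
  refine ⟨hmem, ?_, ?_⟩
  · intro y hy
    rw [Submodule.mem_orthogonal]
    intro u hu
    have := hadj ⟨u, le_iSup E i hu⟩ y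
    rw [← this]
    have hTu : ((T ⟨u, le_iSup E i hu⟩ : H)) ∈ E i := (hT i).1 _ hu
    exact (Submodule.mem_orthogonal _ _).1 hy _ hTu
  · refine ⟨max C 0, fun y hy => ?_⟩
    have hSy : ((S y : H)) ∈ E i := hmem y hy
    have key : ⟪((T (S y) : H)), (y : H)⟫ = ⟪((S y : H)), ((S y : H))⟫ := hadj (S y) y
    have h1 : ‖((S y : H))‖ * ‖((S y : H))‖ = RCLike.re ⟪((S y : H)), ((S y : H))⟫ :=
      (inner_self_eq_norm_mul_norm _).symm
    have h2 : RCLike.re (⟪((T (S y) : H)), (y : H)⟫ : ℂ) ≤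
        ‖((T (S y) : H))‖ * ‖(y : H)‖ :=
      le_trans (RCLike.re_le_norm _) (norm_inner_le_norm _ _)
    have h3 : ‖((T (S y) : H))‖ ≤ C * ‖((S y : H))‖ := hC _ hSy
    have h4 : (0:ℝ) ≤ ‖((S y : H))‖ := norm_nonneg _
    have h5 : (0:ℝ) ≤ ‖(y : H)‖ := norm_nonneg _
    have h6 : C ≤ max C 0 := le_max_left _ _
    have h7 : (0:ℝ) ≤ max C 0 := le_max_right _ _
    have h8 : ‖((S y : H))‖ * ‖((S y : H))‖ ≤ max C 0 * ‖((S y : H))‖ * ‖(y : H)‖ := by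
      rw [h1, ← key]
      refine le_trans h2 ?_
      have : ‖((T (S y) : H))‖ ≤ max C 0 * ‖((S y : H))‖ :=
        le_trans h3 (by gcongr)
      exact mul_le_mul_of_nonneg_right this h5
    rcases eq_or_lt_of_le h4 with h | h
    · rw [← h]; positivity
    · have := (mul_le_mul_iff_right₀ h).mp (by
        calc ‖((S y : H))‖ * ‖((S y : H))‖
            ≤ max C 0 * ‖((S y : H))‖ * ‖(y : H)‖ := h8
          _ = ‖((S y : H))‖ * (max C 0 * ‖(y : H)‖) := by ring)
      exact this

end Aux2

/-! ## Statement 2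

Let `{ℋ; ℰ; 𝒟_ℰ}` be a quantized domain and `T ∈ C*(𝒟_ℰ)`.  Then `𝒟_ℰ` is contained in the
domain of the Hilbert-space adjoint `T★` of the densely defined operator `T`, and the
restriction `T* = T★|_{𝒟_ℰ}` again belongs to `C*(𝒟_ℰ)`.  Moreover, with this involution,
`C*(𝒟_ℰ)` is a unital *-algebra (it contains the identity and is closed under addition,
scalar multiplication, composition and the involution). -/
theorem statement_2 {H : Type*} [NormedAddCommGroup H] [InnerProductSpace ℂ H]
    [CompleteSpace H] {ι : Type*} [Nonempty ι] {E : ι → Submodule ℂ H}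
    (hE : IsQuantizedDomain E) (T : ↥(⨆ i, E i) →ₗ[ℂ] ↥(⨆ i, E i)) (hT : MemCStar E T) :
    -- `𝒟_ℰ ⊆ dom T★`
    ((⨆ i, E i) ≤ (LinearPMap.adjoint (toPMap E T)).domain) ∧
    -- `T★|_{𝒟_ℰ} ∈ C*(𝒟_ℰ)`
    (∃ S : ↥(⨆ i, E i) →ₗ[ℂ] ↥(⨆ i, E i), MemCStar E S ∧
      ∀ (y : ↥(⨆ i, E i)) (hy : (y : H) ∈ (LinearPMap.adjoint (toPMap E T)).domain),
        (S y : H) = LinearPMap.adjoint (toPMap E T) ⟨(y : H), hy⟩) ∧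
    -- `C*(𝒟_ℰ)` is a unital *-algebra:
    MemCStar E (LinearMap.id : ↥(⨆ i, E i) →ₗ[ℂ] ↥(⨆ i, E i)) ∧
    (∀ T₁ T₂ : ↥(⨆ i, E i) →ₗ[ℂ] ↥(⨆ i, E i), MemCStar E T₁ → MemCStar E T₂ →
      MemCStar E (T₁ + T₂) ∧ MemCStar E (T₁ ∘ₗ T₂)) ∧
    (∀ (c : ℂ) (T₁ : ↥(⨆ i, E i) →ₗ[ℂ] ↥(⨆ i, E i)), MemCStar E T₁ →
      MemCStar E (c • T₁)) ∧
    (∀ T₁ S₁ : ↥(⨆ i, E i) →ₗ[ℂ] ↥(⨆ i, E i), MemCStar E T₁ → IsAdjointOn E T₁ S₁ →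
      MemCStar E S₁) := by
  classical
  -- construct the adjoint `S` on `𝒟_ℰ`
  choose Z hZ using aux_exists_adj hE T hT
  have huniq : ∀ (y : ↥(⨆ i, E i)) (w : ↥(⨆ i, E i)),
      (∀ x : ↥(⨆ i, E i), (inner ℂ ((T x : H)) ((y : H)) : ℂ) = inner ℂ ((x : H)) ((w : H))) →
      w = Z y := by
    intro y w hw
    apply Subtype.ext
    apply aux_sep hE
    intro x
    rw [← hw x, hZ y x]
  set Slm : ↥(⨆ i, E i) →ₗ[ℂ] ↥(⨆ i, E i) :=
    { toFun := Z
      map_add' := fun y y' => by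
        symm
        apply huniq
        intro x
        rw [Submodule.coe_add, Submodule.coe_add, inner_add_right, inner_add_right,
          hZ y x, hZ y' x]
      map_smul' := fun c y => by
        symm
        apply huniq
        intro x
        rw [RingHom.id_apply, Submodule.coe_smul, Submodule.coe_smul, inner_smul_right,
          inner_smul_right, hZ y x] } with hSlm
  have hadj : IsAdjointOn E T Slm := fun x y => hZ y x
  have hSmem : MemCStar E Slm := aux_memCStar_of_isAdjointOn hE hT hadj
  have hdense : Dense (((toPMap E T).domain : Set H)) := aux_denseD hE
  have hfa : (toPMap E T).IsFormalAdjoint (toPMap E Slm) := fun x y => hZ y x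
  have hle : toPMap E Slm ≤ LinearPMap.adjoint (toPMap E T) :=
    LinearPMap.IsFormalAdjoint.le_adjoint hdense hfa
  refine ⟨hle.1, ⟨Slm, hSmem, fun y hy => ?_⟩, ?_, ?_, ?_, ?_⟩
  · exact hle.2 (x := y) (y := ⟨(y : H), hy⟩) rfl
  · -- identity
    intro i
    exact ⟨fun x hx => hx, fun x hx => hx, 1, fun x hx => by simp⟩
  · -- addition and composition
    intro T₁ T₂ h₁ h₂
    constructor
    · intro i
      obtain ⟨C₁, hC₁⟩ := (h₁ i).2.2
      obtain ⟨C₂, hC₂⟩ := (h₂ i).2.2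
      refine ⟨fun x hx => ?_, fun x hx => ?_, C₁ + C₂, fun x hx => ?_⟩
      · exact (E i).add_mem ((h₁ i).1 x hx) ((h₂ i).1 x hx)
      · exact ((E i)ᗮ).add_mem ((h₁ i).2.1 x hx) ((h₂ i).2.1 x hx)
      · calc ‖(((T₁ + T₂) x : ↥(⨆ j, E j)) : H)‖ = ‖((T₁ x : H)) + ((T₂ x : H))‖ := rfl
          _ ≤ ‖((T₁ x : H))‖ + ‖((T₂ x : H))‖ := norm_add_le _ _
          _ ≤ C₁ * ‖(x : H)‖ + C₂ * ‖(x : H)‖ := add_le_add (hC₁ x hx) (hC₂ x hx)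
          _ = (C₁ + C₂) * ‖(x : H)‖ := by ring
    · intro i
      obtain ⟨C₁, hC₁⟩ := (h₁ i).2.2
      obtain ⟨C₂, hC₂⟩ := (h₂ i).2.2
      refine ⟨fun x hx => (h₁ i).1 _ ((h₂ i).1 x hx),
        fun x hx => (h₁ i).2.1 _ ((h₂ i).2.1 x hx), max C₁ 0 * C₂, fun x hx => ?_⟩
      have k1 : ‖((T₁ (T₂ x) : H))‖ ≤ C₁ * ‖((T₂ x : H))‖ := hC₁ _ ((h₂ i).1 x hx)
      have k2 : ‖((T₂ x : H))‖ ≤ C₂ * ‖(x : H)‖ := hC₂ x hx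
      have k3 : (0:ℝ) ≤ ‖((T₂ x : H))‖ := norm_nonneg _
      have k5 : C₁ ≤ max C₁ 0 := le_max_left _ _
      have k6 : (0:ℝ) ≤ max C₁ 0 := le_max_right _ _
      calc ‖(((T₁ ∘ₗ T₂) x : ↥(⨆ j, E j)) : H)‖ = ‖((T₁ (T₂ x) : H))‖ := rfl
        _ ≤ C₁ * ‖((T₂ x : H))‖ := k1
        _ ≤ max C₁ 0 * ‖((T₂ x : H))‖ := by gcongr
        _ ≤ max C₁ 0 * (C₂ * ‖(x : H)‖) := by gcongr
        _ = max C₁ 0 * C₂ * ‖(x : H)‖ := by ring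
  · -- scalar multiplication
    intro c T₁ h₁ i
    obtain ⟨C₁, hC₁⟩ := (h₁ i).2.2
    refine ⟨fun x hx => ?_, fun x hx => ?_, ‖c‖ * C₁, fun x hx => ?_⟩
    · exact (E i).smul_mem c ((h₁ i).1 x hx)
    · exact ((E i)ᗮ).smul_mem c ((h₁ i).2.1 x hx)
    · calc ‖(((c • T₁) x : ↥(⨆ j, E j)) : H)‖ = ‖c • ((T₁ x : H))‖ := rfl
        _ = ‖c‖ * ‖((T₁ x : H))‖ := norm_smul _ _
        _ ≤ ‖c‖ * (C₁ * ‖(x : H)‖) :=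
            mul_le_mul_of_nonneg_left (hC₁ x hx) (norm_nonneg c)
        _ = ‖c‖ * C₁ * ‖(x : H)‖ := by ring
  · -- involution
    intro T₁ S₁ h₁ hadj₁
    exact aux_memCStar_of_isAdjointOn hE h₁ hadj₁

end
end

section
/- Let {ℋ; ℰ; 𝒟_ℰ} be a quantized domain in a Hilbert space ℋ, with ℰ = {ℋ_ι : ι ∈ Υ}. For each ι ∈ Υ, the map ‖·‖_ι : C*(𝒟_ℰ) → [0,∞) given by ‖T‖_ι = ‖T|_{ℋ_ι}‖ = sup{‖Tξ‖ : ξ ∈ ℋ_ι, ‖ξ‖ ≤ 1} is a C*-seminorm on C*(𝒟_ℰ), and C*(𝒟_ℰ) is a locally C*-algebra with respect to the upward filtered family {‖·‖_ι}_{ι∈Υ}. -/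
open scoped ComplexOrder

noncomputable section

section Aux3

open Filter Topology

namespace QDAux

variable {H : Type*} [NormedAddCommGroup H] [InnerProductSpace ℂ H] {ι : Type*}
  {E : ι → Submodule ℂ H}

theorem rn_nonneg (i : ι) (T : ↥(⨆ j, E j) →ₗ[ℂ] ↥(⨆ j, E j)) :
    0 ≤ restrictedNorm E i T :=
  Real.sSup_nonneg fun r hr => by obtain ⟨x, -, rfl⟩ := hr; positivity

theorem rn_set_nonempty (i : ι) (T : ↥(⨆ j, E j) →ₗ[ℂ] ↥(⨆ j, E j)) :
    ((fun x : ↥(⨆ j, E j) => ‖(T x : H)‖) '' {x | (x : H) ∈ E i ∧ ‖(x : H)‖ ≤ 1}).Nonempty :=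
  ⟨_, ⟨0, ⟨by simp, by simp⟩, rfl⟩⟩

theorem rn_bddAbove {i : ι} {T : ↥(⨆ j, E j) →ₗ[ℂ] ↥(⨆ j, E j)}
    (hC : ∃ C : ℝ, ∀ x : ↥(⨆ j, E j), (x : H) ∈ E i → ‖(T x : H)‖ ≤ C * ‖(x : H)‖) :
    BddAbove ((fun x : ↥(⨆ j, E j) => ‖(T x : H)‖) ''
      {x | (x : H) ∈ E i ∧ ‖(x : H)‖ ≤ 1}) := by
  obtain ⟨C, hC⟩ := hC
  refine ⟨max C 0, ?_⟩
  rintro r ⟨x, ⟨hx, hx1⟩, rfl⟩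
  have h1 := hC x hx
  have h2 : (0:ℝ) ≤ ‖(x : H)‖ := norm_nonneg _
  have h3 := le_max_left C 0
  have h4 := le_max_right C 0
  nlinarith

theorem memCStar_bddAbove {T : ↥(⨆ j, E j) →ₗ[ℂ] ↥(⨆ j, E j)} (hT : MemCStar E T) (i : ι) :
    BddAbove ((fun x : ↥(⨆ j, E j) => ‖(T x : H)‖) ''
      {x | (x : H) ∈ E i ∧ ‖(x : H)‖ ≤ 1}) :=
  rn_bddAbove (hT i).2.2

theorem rn_apply_le {i : ι} {T : ↥(⨆ j, E j) →ₗ[ℂ] ↥(⨆ j, E j)}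
    (hb : BddAbove ((fun x : ↥(⨆ j, E j) => ‖(T x : H)‖) ''
      {x | (x : H) ∈ E i ∧ ‖(x : H)‖ ≤ 1}))
    {x : ↥(⨆ j, E j)} (hx : (x : H) ∈ E i) :
    ‖(T x : H)‖ ≤ restrictedNorm E i T * ‖(x : H)‖ := by
  rcases eq_or_ne (x : H) 0 with h0 | h0
  · have hx0 : x = 0 := Subtype.ext h0
    simp [hx0]
  · set c : ℂ := ((‖(x : H)‖ : ℝ) : ℂ)⁻¹ with hc
    have hxpos : 0 < ‖(x : H)‖ := norm_pos_iff.mpr h0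
    have hcn : ‖c‖ = ‖(x : H)‖⁻¹ := by
      rw [hc, norm_inv, Complex.norm_real, Real.norm_eq_abs, abs_of_pos hxpos]
    have hy1 : ‖((c • x : ↥(⨆ j, E j)) : H)‖ = 1 := by
      rw [Submodule.coe_smul, norm_smul, hcn, inv_mul_cancel₀ hxpos.ne']
    have hym : ((c • x : ↥(⨆ j, E j)) : H) ∈ E i := by
      rw [Submodule.coe_smul]; exact (E i).smul_mem c hx
    have hle : ‖(T (c • x) : H)‖ ≤ restrictedNorm E i T :=
      le_csSup hb ⟨c • x, ⟨hym, le_of_eq hy1⟩, rfl⟩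
    have hTy : ‖(T (c • x) : H)‖ = ‖(x : H)‖⁻¹ * ‖(T x : H)‖ := by
      rw [map_smul, Submodule.coe_smul, norm_smul, hcn]
    rw [hTy] at hle
    have h2 := mul_le_mul_of_nonneg_left hle hxpos.le
    rw [← mul_assoc, mul_inv_cancel₀ hxpos.ne', one_mul] at h2
    exact h2.trans_eq (mul_comm _ _)

theorem memCStar_apply_le {T : ↥(⨆ j, E j) →ₗ[ℂ] ↥(⨆ j, E j)} (hT : MemCStar E T) (i : ι)
    {x : ↥(⨆ j, E j)} (hx : (x : H) ∈ E i) :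
    ‖(T x : H)‖ ≤ restrictedNorm E i T * ‖(x : H)‖ :=
  rn_apply_le (memCStar_bddAbove hT i) hx

theorem rn_le {i : ι} {T : ↥(⨆ j, E j) →ₗ[ℂ] ↥(⨆ j, E j)} {M : ℝ} (hM : 0 ≤ M)
    (h : ∀ x : ↥(⨆ j, E j), (x : H) ∈ E i → ‖(x : H)‖ ≤ 1 → ‖(T x : H)‖ ≤ M) :
    restrictedNorm E i T ≤ M :=
  Real.sSup_le (by rintro r ⟨x, ⟨hx, hx1⟩, rfl⟩; exact h x hx hx1) hM

theorem rn_zero (i : ι) :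
    restrictedNorm E i (0 : ↥(⨆ j, E j) →ₗ[ℂ] ↥(⨆ j, E j)) = 0 :=
  le_antisymm (rn_le le_rfl fun x _ _ => by simp) (rn_nonneg i 0)

theorem memCStar_sub {T S : ↥(⨆ j, E j) →ₗ[ℂ] ↥(⨆ j, E j)}
    (hT : MemCStar E T) (hS : MemCStar E S) : MemCStar E (T - S) := by
  intro i
  obtain ⟨C, hC⟩ := (hT i).2.2
  obtain ⟨C', hC'⟩ := (hS i).2.2
  have key : ∀ x : ↥(⨆ j, E j), ((T - S) x : H) = (T x : H) - (S x : H) := fun x => by simp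
  refine ⟨fun x hx => ?_, fun x hx => ?_, ⟨C + C', fun x hx => ?_⟩⟩
  · rw [key]; exact sub_mem ((hT i).1 x hx) ((hS i).1 x hx)
  · rw [key]; exact sub_mem ((hT i).2.1 x hx) ((hS i).2.1 x hx)
  · rw [key]
    calc ‖(T x : H) - (S x : H)‖ ≤ ‖(T x : H)‖ + ‖(S x : H)‖ := norm_sub_le _ _
      _ ≤ C * ‖(x : H)‖ + C' * ‖(x : H)‖ := add_le_add (hC x hx) (hC' x hx)
      _ = (C + C') * ‖(x : H)‖ := by ring

theorem memCStar_smul (c : ℂ) {T : ↥(⨆ j, E j) →ₗ[ℂ] ↥(⨆ j, E j)}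
    (hT : MemCStar E T) : MemCStar E (c • T) := by
  intro i
  obtain ⟨C, hC⟩ := (hT i).2.2
  have key : ∀ x : ↥(⨆ j, E j), ((c • T) x : H) = c • (T x : H) := fun x => by simp
  refine ⟨fun x hx => ?_, fun x hx => ?_, ⟨‖c‖ * C, fun x hx => ?_⟩⟩
  · rw [key]; exact (E i).smul_mem c ((hT i).1 x hx)
  · rw [key]; exact ((E i)ᗮ).smul_mem c ((hT i).2.1 x hx)
  · rw [key, norm_smul, mul_assoc]
    exact mul_le_mul_of_nonneg_left (hC x hx) (norm_nonneg c)

theorem memCStar_comp {T S : ↥(⨆ j, E j) →ₗ[ℂ] ↥(⨆ j, E j)}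
    (hT : MemCStar E T) (hS : MemCStar E S) : MemCStar E (T ∘ₗ S) := by
  intro i
  obtain ⟨C, hC⟩ := (hT i).2.2
  obtain ⟨C', hC'⟩ := (hS i).2.2
  refine ⟨fun x hx => (hT i).1 _ ((hS i).1 x hx),
    fun x hx => (hT i).2.1 _ ((hS i).2.1 x hx),
    ⟨max C 0 * max C' 0, fun x hx => ?_⟩⟩
  have h1 : ‖(T (S x) : H)‖ ≤ C * ‖((S x : ↥(⨆ j, E j)) : H)‖ := hC _ ((hS i).1 x hx)
  have h2 := hC' x hx
  have h3 : (0:ℝ) ≤ ‖((S x : ↥(⨆ j, E j)) : H)‖ := norm_nonneg _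
  have h4 : (0:ℝ) ≤ ‖(x : H)‖ := norm_nonneg _
  have h5 := le_max_left C 0
  have h6 := le_max_right C 0
  have h7 := le_max_left C' 0
  have h8 := le_max_right C' 0
  show ‖(T (S x) : H)‖ ≤ max C 0 * max C' 0 * ‖(x : H)‖
  calc ‖(T (S x) : H)‖ ≤ C * ‖((S x : ↥(⨆ j, E j)) : H)‖ := h1
    _ ≤ max C 0 * ‖((S x : ↥(⨆ j, E j)) : H)‖ := mul_le_mul_of_nonneg_right h5 h3
    _ ≤ max C 0 * (max C' 0 * ‖(x : H)‖) := by
        refine mul_le_mul_of_nonneg_left ?_ h6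
        calc ‖((S x : ↥(⨆ j, E j)) : H)‖ ≤ C' * ‖(x : H)‖ := h2
          _ ≤ max C' 0 * ‖(x : H)‖ := mul_le_mul_of_nonneg_right h7 h4
    _ = max C 0 * max C' 0 * ‖(x : H)‖ := by ring

theorem rn_smul_le (i : ι) {T : ↥(⨆ j, E j) →ₗ[ℂ] ↥(⨆ j, E j)} (hT : MemCStar E T) (c : ℂ) :
    restrictedNorm E i (c • T) ≤ ‖c‖ * restrictedNorm E i T := by
  refine rn_le (mul_nonneg (norm_nonneg c) (rn_nonneg i T)) fun x hx hx1 => ?_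
  have key : ((c • T) x : H) = c • (T x : H) := by simp
  rw [key, norm_smul]
  have h2 := memCStar_apply_le hT i hx
  have h3 := rn_nonneg (E := E) i T
  calc ‖c‖ * ‖(T x : H)‖ ≤ ‖c‖ * (restrictedNorm E i T * ‖(x : H)‖) :=
        mul_le_mul_of_nonneg_left h2 (norm_nonneg c)
    _ ≤ ‖c‖ * (restrictedNorm E i T * 1) := by
        refine mul_le_mul_of_nonneg_left ?_ (norm_nonneg c)
        exact mul_le_mul_of_nonneg_left hx1 h3
    _ = ‖c‖ * restrictedNorm E i T := by ring

theorem rn_comp_le (i : ι) {T S : ↥(⨆ j, E j) →ₗ[ℂ] ↥(⨆ j, E j)}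
    (hT : MemCStar E T) (hS : MemCStar E S) :
    restrictedNorm E i (T ∘ₗ S) ≤ restrictedNorm E i T * restrictedNorm E i S := by
  refine rn_le (mul_nonneg (rn_nonneg i T) (rn_nonneg i S)) fun x hx hx1 => ?_
  have hSx : ((S x : ↥(⨆ j, E j)) : H) ∈ E i := (hS i).1 x hx
  show ‖(T (S x) : H)‖ ≤ restrictedNorm E i T * restrictedNorm E i S
  calc ‖(T (S x) : H)‖ ≤ restrictedNorm E i T * ‖((S x : ↥(⨆ j, E j)) : H)‖ :=
        memCStar_apply_le hT i hSx
    _ ≤ restrictedNorm E i T * (restrictedNorm E i S * ‖(x : H)‖) :=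
        mul_le_mul_of_nonneg_left (memCStar_apply_le hS i hx) (rn_nonneg i T)
    _ ≤ restrictedNorm E i T * (restrictedNorm E i S * 1) := by
        refine mul_le_mul_of_nonneg_left ?_ (rn_nonneg i T)
        exact mul_le_mul_of_nonneg_left hx1 (rn_nonneg i S)
    _ = restrictedNorm E i T * restrictedNorm E i S := by ring

section CompleteH

variable [CompleteSpace H]

theorem adj_apply_mem (hE : IsQuantizedDomain E) {T Tad : ↥(⨆ j, E j) →ₗ[ℂ] ↥(⨆ j, E j)}
    (hT : MemCStar E T) (had : IsAdjointOn E T Tad) (i : ι) (y : ↥(⨆ j, E j))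
    (hy : (y : H) ∈ E i) : ((Tad y : ↥(⨆ j, E j)) : H) ∈ E i := by
  haveI : CompleteSpace (E i) := (hE.closed i).completeSpace_coe
  set u : H := ((E i).orthogonalProjectionOnto ((Tad y : ↥(⨆ j, E j)) : H) : H) with hu_def
  have hu : u ∈ E i := ((E i).orthogonalProjectionOnto _).2
  have hv : ((Tad y : ↥(⨆ j, E j)) : H) - u ∈ (E i)ᗮ :=
    (E i).sub_starProjection_mem_orthogonal _
  have hvD : ((Tad y : ↥(⨆ j, E j)) : H) - u ∈ ⨆ j, E j := sub_mem (Tad y).2 (le_iSup E i hu)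
  set v : ↥(⨆ j, E j) := ⟨_, hvD⟩ with hv_def
  have hvE : (v : H) ∈ (E i)ᗮ := hv
  have h1 : (inner ℂ ((T v : H)) ((y : H)) : ℂ) = 0 :=
    (Submodule.mem_orthogonal' _ _).mp ((hT i).2.1 v hvE) _ hy
  have h2 := had v y
  have h3 : (inner ℂ ((v : H)) u : ℂ) = 0 := (Submodule.mem_orthogonal' _ _).mp hvE _ hu
  have h4 : (inner ℂ ((v : H)) (((Tad y : ↥(⨆ j, E j)) : H)) : ℂ) = inner ℂ ((v : H)) ((v : H)) := by
    have hTad : ((Tad y : ↥(⨆ j, E j)) : H) = u + (v : H) := by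
      show ((Tad y : ↥(⨆ j, E j)) : H) = u + (((Tad y : ↥(⨆ j, E j)) : H) - u)
      abel
    rw [hTad, inner_add_right, h3, zero_add]
  have h5 : (inner ℂ ((v : H)) ((v : H)) : ℂ) = 0 := by rw [← h4, ← h2, h1]
  have h6 : (v : H) = 0 := inner_self_eq_zero.mp h5
  have h7 : ((Tad y : ↥(⨆ j, E j)) : H) - u = 0 := h6
  rw [sub_eq_zero.mp h7]
  exact hu

theorem adj_apply_norm_le (hE : IsQuantizedDomain E)
    {T Tad : ↥(⨆ j, E j) →ₗ[ℂ] ↥(⨆ j, E j)}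
    (hT : MemCStar E T) (had : IsAdjointOn E T Tad) (i : ι) (y : ↥(⨆ j, E j))
    (hy : (y : H) ∈ E i) :
    ‖((Tad y : ↥(⨆ j, E j)) : H)‖ ≤ restrictedNorm E i T * ‖(y : H)‖ := by
  have hmem := adj_apply_mem hE hT had i y hy
  have h1 := had (Tad y) y
  have h2 : ‖((Tad y : ↥(⨆ j, E j)) : H)‖ ^ 2 = ‖(inner ℂ ((T (Tad y) : H)) ((y : H)) : ℂ)‖ := by
    rw [h1, inner_self_eq_norm_sq_to_K]
    rw [norm_pow, RCLike.norm_ofReal, abs_norm]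
  have h3 : ‖(inner ℂ ((T (Tad y) : H)) ((y : H)) : ℂ)‖ ≤
      ‖((T (Tad y) : ↥(⨆ j, E j)) : H)‖ * ‖(y : H)‖ := norm_inner_le_norm _ _
  have h4 : ‖((T (Tad y) : ↥(⨆ j, E j)) : H)‖ ≤
      restrictedNorm E i T * ‖((Tad y : ↥(⨆ j, E j)) : H)‖ := memCStar_apply_le hT i hmem
  have ha : (0:ℝ) ≤ ‖((Tad y : ↥(⨆ j, E j)) : H)‖ := norm_nonneg _
  have hr : (0:ℝ) ≤ restrictedNorm E i T := rn_nonneg i T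
  have hy' : (0:ℝ) ≤ ‖(y : H)‖ := norm_nonneg _
  by_cases h0 : ‖((Tad y : ↥(⨆ j, E j)) : H)‖ = 0
  · rw [h0]; positivity
  · have hapos : 0 < ‖((Tad y : ↥(⨆ j, E j)) : H)‖ := lt_of_le_of_ne ha (Ne.symm h0)
    have key : ‖((Tad y : ↥(⨆ j, E j)) : H)‖ * ‖((Tad y : ↥(⨆ j, E j)) : H)‖ ≤
        (restrictedNorm E i T * ‖(y : H)‖) * ‖((Tad y : ↥(⨆ j, E j)) : H)‖ := by
      nlinarith [mul_le_mul_of_nonneg_right h4 hy']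
    exact le_of_mul_le_mul_right key hapos

theorem isAdjointOn_symm {T Tad : ↥(⨆ j, E j) →ₗ[ℂ] ↥(⨆ j, E j)}
    (had : IsAdjointOn E T Tad) : IsAdjointOn E Tad T := fun x y => by
  calc (inner ℂ ((Tad x : H)) ((y : H)) : ℂ)
      = starRingEnd ℂ (inner ℂ ((y : H)) ((Tad x : H))) := (inner_conj_symm _ _).symm
    _ = starRingEnd ℂ (inner ℂ ((T y : H)) ((x : H))) := by rw [← had y x]
    _ = inner ℂ ((x : H)) ((T y : H)) := inner_conj_symm _ _

theorem memCStar_adj (hE : IsQuantizedDomain E) {T Tad : ↥(⨆ j, E j) →ₗ[ℂ] ↥(⨆ j, E j)}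
    (hT : MemCStar E T) (had : IsAdjointOn E T Tad) : MemCStar E Tad := by
  intro i
  refine ⟨fun x hx => adj_apply_mem hE hT had i x hx, fun x hx => ?_,
    ⟨restrictedNorm E i T, fun x hx => adj_apply_norm_le hE hT had i x hx⟩⟩
  rw [Submodule.mem_orthogonal]
  intro u hu
  have huD : u ∈ ⨆ j, E j := le_iSup E i hu
  have h : (inner ℂ u ((Tad x : H)) : ℂ) =
      inner ℂ ((T ⟨u, huD⟩ : H)) ((x : H)) := (had ⟨u, huD⟩ x).symm
  rw [h]
  have hTu : ((T ⟨u, huD⟩ : ↥(⨆ j, E j)) : H) ∈ E i := (hT i).1 _ hu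
  exact (Submodule.mem_orthogonal _ _).mp hx _ hTu

theorem rn_adj_le (hE : IsQuantizedDomain E) {T Tad : ↥(⨆ j, E j) →ₗ[ℂ] ↥(⨆ j, E j)}
    (hT : MemCStar E T) (had : IsAdjointOn E T Tad) (i : ι) :
    restrictedNorm E i Tad ≤ restrictedNorm E i T := by
  refine rn_le (rn_nonneg i T) fun x hx hx1 => ?_
  have h := adj_apply_norm_le hE hT had i x hx
  have hr := rn_nonneg (E := E) i T
  calc ‖((Tad x : ↥(⨆ j, E j)) : H)‖ ≤ restrictedNorm E i T * ‖(x : H)‖ := h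
    _ ≤ restrictedNorm E i T * 1 := mul_le_mul_of_nonneg_left hx1 hr
    _ = restrictedNorm E i T := mul_one _

theorem rn_adj_eq (hE : IsQuantizedDomain E) {T Tad : ↥(⨆ j, E j) →ₗ[ℂ] ↥(⨆ j, E j)}
    (hT : MemCStar E T) (had : IsAdjointOn E T Tad) (i : ι) :
    restrictedNorm E i Tad = restrictedNorm E i T :=
  le_antisymm (rn_adj_le hE hT had i)
    (rn_adj_le hE (memCStar_adj hE hT had) (isAdjointOn_symm had) i)

theorem rn_cstar (hE : IsQuantizedDomain E) {T Tad : ↥(⨆ j, E j) →ₗ[ℂ] ↥(⨆ j, E j)}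
    (hT : MemCStar E T) (had : IsAdjointOn E T Tad) (i : ι) :
    restrictedNorm E i (Tad ∘ₗ T) = restrictedNorm E i T ^ 2 := by
  have hTad := memCStar_adj hE hT had
  have hle : restrictedNorm E i (Tad ∘ₗ T) ≤ restrictedNorm E i T ^ 2 := by
    have h := rn_comp_le i hTad hT
    rw [rn_adj_eq hE hT had i] at h
    rw [sq]; exact h
  refine le_antisymm hle ?_
  have h2 : (0:ℝ) ≤ restrictedNorm E i (Tad ∘ₗ T) := rn_nonneg _ _
  have key : restrictedNorm E i T ≤ Real.sqrt (restrictedNorm E i (Tad ∘ₗ T)) := by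
    refine rn_le (Real.sqrt_nonneg _) fun x hx hx1 => ?_
    have h1 := had x (T x)
    have hsq : ‖((T x : ↥(⨆ j, E j)) : H)‖ ^ 2 =
        ‖(inner ℂ ((x : H)) ((Tad (T x) : H)) : ℂ)‖ := by
      rw [← h1, inner_self_eq_norm_sq_to_K]
      rw [norm_pow, RCLike.norm_ofReal, abs_norm]
    have h3 : ‖(inner ℂ ((x : H)) ((Tad (T x) : H)) : ℂ)‖ ≤
        ‖(x : H)‖ * ‖((Tad (T x) : ↥(⨆ j, E j)) : H)‖ := norm_inner_le_norm _ _
    have h4 : ‖((Tad (T x) : ↥(⨆ j, E j)) : H)‖ ≤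
        restrictedNorm E i (Tad ∘ₗ T) * ‖(x : H)‖ :=
      memCStar_apply_le (memCStar_comp hTad hT) i hx
    have h5 : ‖((T x : ↥(⨆ j, E j)) : H)‖ ^ 2 ≤ restrictedNorm E i (Tad ∘ₗ T) := by
      have hx0 : (0:ℝ) ≤ ‖(x : H)‖ := norm_nonneg _
      have h7 : ‖(x : H)‖ * ‖(x : H)‖ ≤ 1 := by nlinarith
      nlinarith [mul_le_mul_of_nonneg_left h4 hx0,
        mul_le_mul_of_nonneg_left h7 h2]
    exact Real.le_sqrt_of_sq_le h5
  calc restrictedNorm E i T ^ 2 ≤ Real.sqrt (restrictedNorm E i (Tad ∘ₗ T)) ^ 2 :=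
        pow_le_pow_left₀ (rn_nonneg i T) key 2
    _ = restrictedNorm E i (Tad ∘ₗ T) := Real.sq_sqrt h2

end CompleteH

end QDAux

end Aux3

/-! ## Statement 3

For each `ι ∈ Υ`, `‖T‖_ι = ‖T|_{ℋ_ι}‖ = sup {‖T ξ‖ : ξ ∈ ℋ_ι, ‖ξ‖ ≤ 1}` (here
`restrictedNorm E i`) is a C*-seminorm on `C*(𝒟_ℰ)`, and `C*(𝒟_ℰ)` is a locally C*-algebra
with respect to the upward filtered family `{‖·‖_ι}`: the family is upward filtered and
separating (so the topology is Hausdorff), and `C*(𝒟_ℰ)` is complete (every Cauchy filter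
w.r.t. the seminorms converges). -/
theorem statement_3 {H : Type*} [NormedAddCommGroup H] [InnerProductSpace ℂ H]
    [CompleteSpace H] {ι : Type*} [Nonempty ι] {E : ι → Submodule ℂ H}
    (hE : IsQuantizedDomain E) :
    -- each `‖·‖_ι` is a C*-seminorm on `C*(𝒟_ℰ)`
    (∀ (i : ι) (T S : ↥(⨆ j, E j) →ₗ[ℂ] ↥(⨆ j, E j)), MemCStar E T → MemCStar E S →
      0 ≤ restrictedNorm E i T ∧
      restrictedNorm E i (T + S) ≤ restrictedNorm E i T + restrictedNorm E i S ∧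
      (∀ c : ℂ, restrictedNorm E i (c • T) = ‖c‖ * restrictedNorm E i T) ∧
      restrictedNorm E i (T ∘ₗ S) ≤ restrictedNorm E i T * restrictedNorm E i S ∧
      (∀ Tad : ↥(⨆ j, E j) →ₗ[ℂ] ↥(⨆ j, E j), IsAdjointOn E T Tad →
        restrictedNorm E i Tad = restrictedNorm E i T ∧
        restrictedNorm E i (Tad ∘ₗ T) = restrictedNorm E i T ^ 2)) ∧
    -- the family `{‖·‖_ι}` is upward filtered
    (∀ i j : ι, ∃ k : ι, ∀ T : ↥(⨆ j, E j) →ₗ[ℂ] ↥(⨆ j, E j), MemCStar E T →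
      restrictedNorm E i T ≤ restrictedNorm E k T ∧
      restrictedNorm E j T ≤ restrictedNorm E k T) ∧
    -- Hausdorff
    (∀ T : ↥(⨆ j, E j) →ₗ[ℂ] ↥(⨆ j, E j), MemCStar E T →
      (∀ i, restrictedNorm E i T = 0) → T = 0) ∧
    -- completeness of `C*(𝒟_ℰ)` w.r.t. the family `{‖·‖_ι}`
    (∀ f : Filter {T : ↥(⨆ j, E j) →ₗ[ℂ] ↥(⨆ j, E j) // MemCStar E T}, f.NeBot →
      (∀ (i : ι) (ε : ℝ), 0 < ε → ∃ s ∈ f, ∀ T₁ ∈ s, ∀ T₂ ∈ s,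
        restrictedNorm E i (T₁.val - T₂.val) < ε) →
      ∃ L : {T : ↥(⨆ j, E j) →ₗ[ℂ] ↥(⨆ j, E j) // MemCStar E T},
        ∀ (i : ι) (ε : ℝ), 0 < ε → ∃ s ∈ f, ∀ T₁ ∈ s,
          restrictedNorm E i (T₁.val - L.val) < ε) := by
  open QDAux Filter Topology in
  refine ⟨?_, ?_, ?_, ?_⟩
  · -- C*-seminorm properties
    intro i T S hT hS
    refine ⟨rn_nonneg i T, ?_, ?_, rn_comp_le i hT hS, ?_⟩
    · -- subadditivity
      refine rn_le (add_nonneg (rn_nonneg i T) (rn_nonneg i S)) fun x hx hx1 => ?_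
      have key : ((T + S) x : H) = (T x : H) + (S x : H) := by simp
      rw [key]
      have h1 := memCStar_apply_le hT i hx
      have h2 := memCStar_apply_le hS i hx
      have h3 := norm_add_le ((T x : ↥(⨆ j, E j)) : H) ((S x : ↥(⨆ j, E j)) : H)
      have hrT := rn_nonneg (E := E) i T
      have hrS := rn_nonneg (E := E) i S
      nlinarith
    · -- homogeneity
      intro c
      rcases eq_or_ne c 0 with rfl | hc
      · rw [zero_smul, rn_zero]; simp
      · refine le_antisymm (rn_smul_le i hT c) ?_
        have h1 : restrictedNorm E i T ≤ ‖c⁻¹‖ * restrictedNorm E i (c • T) := by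
          have h := rn_smul_le i (memCStar_smul c hT) c⁻¹
          rwa [smul_smul, inv_mul_cancel₀ hc, one_smul] at h
        have h2 : ‖c‖ * ‖c⁻¹‖ = 1 := by
          rw [← norm_mul, mul_inv_cancel₀ hc, norm_one]
        calc ‖c‖ * restrictedNorm E i T
            ≤ ‖c‖ * (‖c⁻¹‖ * restrictedNorm E i (c • T)) :=
              mul_le_mul_of_nonneg_left h1 (norm_nonneg c)
          _ = (‖c‖ * ‖c⁻¹‖) * restrictedNorm E i (c • T) := by ring
          _ = restrictedNorm E i (c • T) := by rw [h2, one_mul]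
    · -- star and C* identity
      intro Tad had
      exact ⟨rn_adj_eq hE hT had i, rn_cstar hE hT had i⟩
  · -- upward filtered
    intro i j
    obtain ⟨k, hik, hjk⟩ := hE.directed i j
    refine ⟨k, fun T hT => ⟨?_, ?_⟩⟩
    · unfold restrictedNorm
      refine csSup_le_csSup (memCStar_bddAbove hT k) (rn_set_nonempty i T) ?_
      rintro r ⟨x, ⟨hx, hx1⟩, rfl⟩
      exact ⟨x, ⟨hik hx, hx1⟩, rfl⟩
    · unfold restrictedNorm
      refine csSup_le_csSup (memCStar_bddAbove hT k) (rn_set_nonempty j T) ?_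
      rintro r ⟨x, ⟨hx, hx1⟩, rfl⟩
      exact ⟨x, ⟨hjk hx, hx1⟩, rfl⟩
  · -- separating
    intro T hT h0
    ext x
    obtain ⟨i, hx⟩ := (Submodule.mem_iSup_of_directed E hE.directed).mp x.2
    have h1 := memCStar_apply_le hT i hx
    rw [h0 i, zero_mul] at h1
    have h2 : ((T x : ↥(⨆ j, E j)) : H) = 0 := norm_le_zero_iff.mp h1
    rw [LinearMap.zero_apply]
    simpa using h2
  · -- completeness
    intro f hne hcau
    haveI := hne
    have hmemi : ∀ x : ↥(⨆ j, E j), ∃ i, (x : H) ∈ E i := fun x =>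
      (Submodule.mem_iSup_of_directed E hE.directed).mp x.2
    have hlim : ∀ x : ↥(⨆ j, E j), ∃ y : H,
        Filter.Tendsto
          (fun T : {T : ↥(⨆ j, E j) →ₗ[ℂ] ↥(⨆ j, E j) // MemCStar E T} =>
            ((T.val x : ↥(⨆ j, E j)) : H)) f (nhds y) := by
      intro x
      obtain ⟨i, hx⟩ := hmemi x
      have hc : Cauchy (f.map fun T : {T : ↥(⨆ j, E j) →ₗ[ℂ] ↥(⨆ j, E j) // MemCStar E T} =>
          ((T.val x : ↥(⨆ j, E j)) : H)) := by
        rw [Metric.cauchy_iff]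
        refine ⟨hne.map _, fun ε hε => ?_⟩
        obtain ⟨s, hs, hs2⟩ := hcau i (ε / (‖(x : H)‖ + 1)) (by positivity)
        refine ⟨(fun T : {T : ↥(⨆ j, E j) →ₗ[ℂ] ↥(⨆ j, E j) // MemCStar E T} =>
          ((T.val x : ↥(⨆ j, E j)) : H)) '' s, Filter.image_mem_map hs, ?_⟩
        rintro a ⟨T₁, hT₁, rfl⟩ b ⟨T₂, hT₂, rfl⟩
        have hsub := memCStar_sub T₁.2 T₂.2
        have h1 : ‖(((T₁.val - T₂.val) x : ↥(⨆ j, E j)) : H)‖ ≤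
            restrictedNorm E i (T₁.val - T₂.val) * ‖(x : H)‖ :=
          memCStar_apply_le hsub i hx
        have h2 := hs2 T₁ hT₁ T₂ hT₂
        have h3 : (((T₁.val - T₂.val) x : ↥(⨆ j, E j)) : H) =
            ((T₁.val x : ↥(⨆ j, E j)) : H) - ((T₂.val x : ↥(⨆ j, E j)) : H) := by simp
        rw [dist_eq_norm, ← h3]
        have hx0 : (0:ℝ) ≤ ‖(x : H)‖ := norm_nonneg _
        have hr0 : (0:ℝ) ≤ restrictedNorm E i (T₁.val - T₂.val) := rn_nonneg _ _
        have h5 : (0:ℝ) < ‖(x : H)‖ + 1 := by positivity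
        have h4 : restrictedNorm E i (T₁.val - T₂.val) * (‖(x : H)‖ + 1) < ε := by
          calc restrictedNorm E i (T₁.val - T₂.val) * (‖(x : H)‖ + 1)
              < (ε / (‖(x : H)‖ + 1)) * (‖(x : H)‖ + 1) := mul_lt_mul_of_pos_right h2 h5
            _ = ε := div_mul_cancel₀ _ h5.ne'
        nlinarith
      exact CompleteSpace.complete hc
    choose g hg using hlim
    have hgmem : ∀ (i : ι) (x : ↥(⨆ j, E j)), (x : H) ∈ E i → g x ∈ E i := fun i x hx =>
      (hE.closed i).mem_of_tendsto (hg x)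
        (Filter.Eventually.of_forall fun T => (T.2 i).1 x hx)
    have hgperp : ∀ (i : ι) (x : ↥(⨆ j, E j)), (x : H) ∈ (E i)ᗮ → g x ∈ (E i)ᗮ :=
      fun i x hx =>
        (Submodule.isClosed_orthogonal (E i)).mem_of_tendsto (hg x)
          (Filter.Eventually.of_forall fun T => (T.2 i).2.1 x hx)
    have hgD : ∀ x : ↥(⨆ j, E j), g x ∈ ⨆ j, E j := fun x => by
      obtain ⟨i, hx⟩ := hmemi x
      exact le_iSup E i (hgmem i x hx)
    let L0 : ↥(⨆ j, E j) →ₗ[ℂ] ↥(⨆ j, E j) :=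
      { toFun := fun x => ⟨g x, hgD x⟩
        map_add' := fun x y => Subtype.ext (tendsto_nhds_unique (hg (x + y)) (by
          have h1 := (hg x).add (hg y)
          have h2 : (fun T : {T : ↥(⨆ j, E j) →ₗ[ℂ] ↥(⨆ j, E j) // MemCStar E T} =>
              ((T.val (x + y) : ↥(⨆ j, E j)) : H)) =
              fun T => ((T.val x : ↥(⨆ j, E j)) : H) + ((T.val y : ↥(⨆ j, E j)) : H) := by
            funext T; simp
          rw [h2]; exact h1))
        map_smul' := fun c x => Subtype.ext (tendsto_nhds_unique (hg (c • x)) (by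
          have h1 := (hg x).const_smul c
          have h2 : (fun T : {T : ↥(⨆ j, E j) →ₗ[ℂ] ↥(⨆ j, E j) // MemCStar E T} =>
              ((T.val (c • x) : ↥(⨆ j, E j)) : H)) =
              fun T => c • ((T.val x : ↥(⨆ j, E j)) : H) := by
            funext T; simp
          rw [h2]; exact h1)) }
    have hL0apply : ∀ x : ↥(⨆ j, E j), ((L0 x : ↥(⨆ j, E j)) : H) = g x := fun x => rfl
    have hL : MemCStar E L0 := by
      intro i
      refine ⟨fun x hx => by rw [hL0apply]; exact hgmem i x hx,
        fun x hx => by rw [hL0apply]; exact hgperp i x hx, ?_⟩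
      obtain ⟨s, hs, hs2⟩ := hcau i 1 one_pos
      obtain ⟨T₀, hT₀⟩ := Filter.nonempty_of_mem hs
      obtain ⟨C, hC⟩ := (T₀.2 i).2.2
      refine ⟨C + 1, fun x hx => ?_⟩
      have hball : g x ∈ Metric.closedBall ((T₀.val x : ↥(⨆ j, E j)) : H) ‖(x : H)‖ := by
        refine Metric.isClosed_closedBall.mem_of_tendsto (hg x) ?_
        filter_upwards [hs] with T hT
        have hsub := memCStar_sub T.2 T₀.2
        have h1 := memCStar_apply_le hsub i (x := x) hx
        have h2 := hs2 T hT T₀ hT₀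
        have h3 : (((T.val - T₀.val) x : ↥(⨆ j, E j)) : H) =
            ((T.val x : ↥(⨆ j, E j)) : H) - ((T₀.val x : ↥(⨆ j, E j)) : H) := by simp
        rw [Metric.mem_closedBall, dist_eq_norm, ← h3]
        have hr0 := rn_nonneg (E := E) i (T.val - T₀.val)
        have hx0 : (0:ℝ) ≤ ‖(x : H)‖ := norm_nonneg _
        nlinarith
      have h5 := Metric.mem_closedBall.mp hball
      rw [dist_eq_norm] at h5
      have h6 := norm_sub_norm_le (g x) ((T₀.val x : ↥(⨆ j, E j)) : H)
      have h7 := hC x hx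
      rw [hL0apply]
      have hxn : ‖x‖ = ‖(x : H)‖ := rfl
      linarith
    refine ⟨⟨L0, hL⟩, fun i ε hε => ?_⟩
    obtain ⟨s, hs, hs2⟩ := hcau i (ε / 2) (by positivity)
    refine ⟨s, hs, fun T₁ hT₁ => ?_⟩
    have hbound : restrictedNorm E i (T₁.val - L0) ≤ ε / 2 := by
      refine rn_le (by positivity) fun x hx hx1 => ?_
      have h3 : (((T₁.val - L0) x : ↥(⨆ j, E j)) : H) =
          ((T₁.val x : ↥(⨆ j, E j)) : H) - g x := by
        simp [hL0apply]
      rw [h3]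
      have hball : g x ∈ Metric.closedBall ((T₁.val x : ↥(⨆ j, E j)) : H) (ε / 2) := by
        refine Metric.isClosed_closedBall.mem_of_tendsto (hg x) ?_
        filter_upwards [hs] with T hT
        have hsub := memCStar_sub T.2 T₁.2
        have h1 := memCStar_apply_le hsub i (x := x) hx
        have h2 := hs2 T hT T₁ hT₁
        have h4 : (((T.val - T₁.val) x : ↥(⨆ j, E j)) : H) =
            ((T.val x : ↥(⨆ j, E j)) : H) - ((T₁.val x : ↥(⨆ j, E j)) : H) := by simp
        rw [Metric.mem_closedBall, dist_eq_norm, ← h4]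
        have hr0 := rn_nonneg (E := E) i (T.val - T₁.val)
        have hx0 : (0:ℝ) ≤ ‖(x : H)‖ := norm_nonneg _
        nlinarith
      have h5 := Metric.mem_closedBall.mp hball
      rw [dist_eq_norm] at h5
      rw [norm_sub_rev]
      exact h5
    linarith

end
end

section
/- Let {ℋ; ℰ; 𝒟_ℰ} be a quantized domain in a Hilbert space ℋ, with ℰ = {ℋ_ι : ι ∈ Υ}. The C*-algebra b(C*(𝒟_ℰ)) of bounded elements of C*(𝒟_ℰ) is isometrically *-isomorphic to the C*-algebra {T ∈ B(ℋ) : P_ι T = T P_ι for all ι ∈ Υ} via the map T ↦ T̃, where T̃ is the unique bounded extension of T from 𝒟_ℰ to ℋ. -/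
open scoped ComplexOrder

noncomputable section

/-! ### Auxiliary lemmas for Statement 4 -/

section Statement4Aux

variable {H : Type*} [NormedAddCommGroup H] [InnerProductSpace ℂ H] [CompleteSpace H]

theorem projCL_eq_self {K : Submodule ℂ H} (hK : IsClosed (K : Set H)) {x : H} (hx : x ∈ K) :
    projCL K hK x = x := by
  haveI : CompleteSpace K := hK.completeSpace_coe
  exact Submodule.starProjection_eq_self_iff.mpr hx

theorem projCL_eq_zero {K : Submodule ℂ H} (hK : IsClosed (K : Set H)) {x : H} (hx : x ∈ Kᗮ) :
    projCL K hK x = 0 := by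
  haveI : CompleteSpace K := hK.completeSpace_coe
  show ((K.orthogonalProjectionOnto x : K) : H) = 0
  rw [Submodule.orthogonalProjectionOnto_apply_of_mem_orthogonal hx]
  rfl

theorem sub_projCL_mem (K : Submodule ℂ H) (hK : IsClosed (K : Set H)) (x : H) :
    x - projCL K hK x ∈ Kᗮ := by
  haveI : CompleteSpace K := hK.completeSpace_coe
  exact Submodule.sub_starProjection_mem_orthogonal x

end Statement4Aux

/-! ## Statement 4

The C*-algebra `b(C*(𝒟_ℰ))` of bounded elements of `C*(𝒟_ℰ)` is isometrically *-isomorphic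
to `{T ∈ B(ℋ) : P_ι T = T P_ι for all ι}` via `T ↦ T̃`, where `T̃` is the unique bounded
extension of `T` to `H`.  The map `Φ` below sends each bounded element of `C*(𝒟_ℰ)` to its
extension; it is injective, its range is the commutant of the projections, it is isometric
(`‖T̃‖ = ‖T‖_∞ = sup_ι ‖T‖_ι`), and it is linear, multiplicative, and star-preserving. -/
theorem statement_4 {H : Type*} [NormedAddCommGroup H] [InnerProductSpace ℂ H]
    [CompleteSpace H] {ι : Type*} [Nonempty ι] {E : ι → Submodule ℂ H}
    (hE : IsQuantizedDomain E) :
    ∃ Φ : {T : ↥(⨆ i, E i) →ₗ[ℂ] ↥(⨆ i, E i) //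
        MemCStar E T ∧ ∃ C : ℝ, ∀ x : ↥(⨆ i, E i), ‖(T x : H)‖ ≤ C * ‖x‖} → H →L[ℂ] H,
      (∀ T, ∀ x : ↥(⨆ i, E i), Φ T (x : H) = (T.val x : H)) ∧
      Function.Injective Φ ∧
      Set.range Φ = {B : H →L[ℂ] H | ∀ (i : ι) (y : H),
        B (projCL (E i) (hE.closed i) y) = projCL (E i) (hE.closed i) (B y)} ∧
      (∀ T, ‖Φ T‖ = sSup (Set.range fun i : ι => restrictedNorm E i T.val)) ∧
      (∀ T S U, U.val = T.val + S.val → Φ U = Φ T + Φ S) ∧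
      (∀ (c : ℂ) T U, U.val = c • T.val → Φ U = c • Φ T) ∧
      (∀ T S U, U.val = T.val ∘ₗ S.val → Φ U = (Φ T).comp (Φ S)) ∧
      (∀ T S, IsAdjointOn E T.val S.val → Φ S = ContinuousLinearMap.adjoint (Φ T)) := by
  classical
  have hdir := hE.directed
  have hDdense : Dense ((⨆ i, E i : Submodule ℂ H) : Set H) :=
    hE.dense.mono (Set.iUnion_subset fun i x hx => le_iSup E i hx)
  have hmem : ∀ x : ↥(⨆ i, E i), ∃ i, (x : H) ∈ E i :=
    fun x => (Submodule.mem_iSup_of_directed _ hdir).mp x.2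
  set P : ι → H →L[ℂ] H := fun i => projCL (E i) (hE.closed i) with hPdef
  set Φ : {T : ↥(⨆ i, E i) →ₗ[ℂ] ↥(⨆ i, E i) //
        MemCStar E T ∧ ∃ C : ℝ, ∀ x : ↥(⨆ i, E i), ‖(T x : H)‖ ≤ C * ‖x‖} → H →L[ℂ] H :=
    fun T =>
      (LinearMap.mkContinuous ((⨆ i, E i).subtype ∘ₗ T.val) T.2.2.choose
        T.2.2.choose_spec).extend
        (Submodule.subtypeL _) with hΦdef
  have hΦ : ∀ T, ∀ x : ↥(⨆ i, E i), Φ T (x : H) = (T.val x : H) :=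
    fun T x => ContinuousLinearMap.extend_eq _ hDdense.denseRange_val
      isUniformEmbedding_subtype_val.isUniformInducing x
  have hext : ∀ f g : H →L[ℂ] H,
      (∀ x : ↥(⨆ i, E i), f (x : H) = g (x : H)) → f = g := by
    intro f g h
    apply ContinuousLinearMap.coeFn_injective
    refine Continuous.ext_on hDdense f.continuous g.continuous ?_
    intro y hy
    exact h ⟨y, hy⟩
  have hTcomm : ∀ T i (y : H), Φ T (P i y) = P i (Φ T y) := by
    intro T i
    have key : ∀ y : ↥(⨆ i, E i), Φ T (P i (y : H)) = P i (Φ T (y : H)) := by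
      intro y
      obtain ⟨j, hj⟩ := hmem y
      obtain ⟨k, hik, hjk⟩ := hdir i j
      have h1m : P i (y : H) ∈ E i := projCL_mem _ _ _
      set x1 : ↥(⨆ i, E i) := ⟨P i (y : H), le_iSup E i h1m⟩ with hx1
      have h2o : (y : H) - P i (y : H) ∈ (E i)ᗮ := sub_projCL_mem _ _ _
      have h2k : (y : H) - P i (y : H) ∈ E k := Submodule.sub_mem _ (hjk hj) (hik h1m)
      set x2 : ↥(⨆ i, E i) := ⟨(y : H) - P i (y : H), le_iSup E k h2k⟩ with hx2
      have hx : y = x1 + x2 := Subtype.ext (by simp [hx1, hx2])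
      have hT1 : (T.val x1 : H) ∈ E i := (T.2.1 i).1 x1 h1m
      have hT2 : (T.val x2 : H) ∈ (E i)ᗮ := (T.2.1 i).2.1 x2 h2o
      have lhs : Φ T (P i (y : H)) = (T.val x1 : H) := hΦ T x1
      have rhs : Φ T (y : H) = (T.val x1 : H) + (T.val x2 : H) := by
        rw [show ((y : ↥(⨆ i, E i)) : H) = ((x1 + x2 : ↥(⨆ i, E i)) : H) from by rw [← hx]]
        rw [hΦ T (x1 + x2), map_add]
        rfl
      rw [lhs, rhs, map_add]
      rw [show P i ((T.val x1 : H)) = (T.val x1 : H) from projCL_eq_self _ hT1,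
        show P i ((T.val x2 : H)) = 0 from projCL_eq_zero _ hT2, add_zero]
    intro y
    have hcl : IsClosed {y : H | Φ T (P i y) = P i (Φ T y)} :=
      isClosed_eq ((Φ T).continuous.comp (P i).continuous)
        ((P i).continuous.comp (Φ T).continuous)
    refine hcl.closure_subset_iff.mpr ?_ (hDdense y)
    intro z hz
    exact key ⟨z, hz⟩
  refine ⟨Φ, hΦ, ?_, ?_, ?_, ?_, ?_, ?_, ?_⟩
  · -- injectivity
    intro T S h
    apply Subtype.ext
    apply LinearMap.ext
    intro x
    apply Subtype.ext
    rw [← hΦ T x, ← hΦ S x, h]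
  · -- range
    apply Set.Subset.antisymm
    · rintro _ ⟨T, rfl⟩
      exact fun i y => hTcomm T i y
    · intro B hB
      have hBE : ∀ i, ∀ x : H, x ∈ E i → B x ∈ E i := by
        intro i x hx
        have h1 : B x = P i (B x) := by
          conv_lhs => rw [← projCL_eq_self (hE.closed i) hx]
          exact hB i x
        rw [h1]
        exact projCL_mem _ _ _
      have hBO : ∀ i, ∀ x : H, x ∈ (E i)ᗮ → B x ∈ (E i)ᗮ := by
        intro i x hx
        have h0 : P i x = 0 := projCL_eq_zero _ hx
        have hsub : B x - P i (B x) ∈ (E i)ᗮ := sub_projCL_mem _ _ _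
        have h2 : P i (B x) = 0 := by rw [← hB i x, h0, map_zero]
        simpa [h2] using hsub
      set TB : ↥(⨆ i, E i) →ₗ[ℂ] ↥(⨆ i, E i) :=
        { toFun := fun x => ⟨B x, by
            obtain ⟨i, hi⟩ := hmem x
            exact le_iSup E i (hBE i _ hi)⟩
          map_add' := fun x y => Subtype.ext (by simp)
          map_smul' := fun c x => Subtype.ext (by simp) } with hTB
      have hmemC : MemCStar E TB := fun i =>
        ⟨fun x hx => hBE i _ hx, fun x hx => hBO i _ hx,
         ⟨‖B‖, fun x _ => B.le_opNorm (x : H)⟩⟩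
      refine ⟨⟨TB, hmemC, ‖B‖, fun x => B.le_opNorm (x : H)⟩, ?_⟩
      exact hext _ _ (fun x => hΦ _ x)
  · -- norm
    intro T
    set NS := Set.range fun i : ι => restrictedNorm E i T.val with hNS
    have hval : ∀ i, ∀ v ∈ (fun x : ↥(⨆ j, E j) => ‖(T.val x : H)‖) ''
        {x | (x : H) ∈ E i ∧ ‖(x : H)‖ ≤ 1}, v ≤ ‖Φ T‖ := by
      rintro i v ⟨x, ⟨hxi, hx1⟩, rfl⟩
      calc ‖(T.val x : H)‖ = ‖Φ T (x : H)‖ := by rw [hΦ T x]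
        _ ≤ ‖Φ T‖ * ‖(x : H)‖ := (Φ T).le_opNorm _
        _ ≤ ‖Φ T‖ * 1 := mul_le_mul_of_nonneg_left hx1 (norm_nonneg _)
        _ = ‖Φ T‖ := mul_one _
    have hrn_le : ∀ i, restrictedNorm E i T.val ≤ ‖Φ T‖ := fun i =>
      Real.sSup_le (hval i) (norm_nonneg _)
    have hbddNS : BddAbove NS := ⟨‖Φ T‖, by rintro _ ⟨i, rfl⟩; exact hrn_le i⟩
    have hbddim : ∀ i, BddAbove ((fun x : ↥(⨆ j, E j) => ‖(T.val x : H)‖) ''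
        {x | (x : H) ∈ E i ∧ ‖(x : H)‖ ≤ 1}) :=
      fun i => ⟨‖Φ T‖, fun v hv => hval i v hv⟩
    have hNS_nonneg : 0 ≤ sSup NS := by
      obtain ⟨i⟩ := ‹Nonempty ι›
      have h0 : (0 : ℝ) ∈ (fun x : ↥(⨆ j, E j) => ‖(T.val x : H)‖) ''
          {x | (x : H) ∈ E i ∧ ‖(x : H)‖ ≤ 1} :=
        ⟨0, ⟨(E i).zero_mem, by simp⟩, by simp⟩
      exact le_trans (le_csSup (hbddim i) h0) (le_trans le_rfl
        (le_trans le_rfl ((le_csSup hbddNS ⟨i, rfl⟩))))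
    refine le_antisymm ?_ (Real.sSup_le (by rintro _ ⟨i, rfl⟩; exact hrn_le i) (norm_nonneg _))
    refine (Φ T).opNorm_le_bound hNS_nonneg ?_
    have hcl : IsClosed {y : H | ‖Φ T y‖ ≤ sSup NS * ‖y‖} :=
      isClosed_le ((Φ T).continuous.norm) (continuous_const.mul continuous_norm)
    intro y
    refine hcl.closure_subset_iff.mpr ?_ (hDdense y)
    intro z hz
    obtain ⟨i, hi⟩ := (Submodule.mem_iSup_of_directed _ hdir).mp hz
    by_cases h0 : z = 0
    · simp [h0]
    · set x : ↥(⨆ j, E j) := ⟨z, hz⟩ with hx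
      set u : ↥(⨆ j, E j) := (‖z‖⁻¹ : ℂ) • x with hu
      have hu1 : (u : H) ∈ E i := by
        show (‖z‖⁻¹ : ℂ) • z ∈ E i
        exact (E i).smul_mem _ hi
      have hun : ‖(u : H)‖ ≤ 1 := by
        show ‖(‖z‖⁻¹ : ℂ) • z‖ ≤ 1
        rw [norm_smul, norm_inv, Complex.norm_real, norm_norm,
          inv_mul_cancel₀ (norm_ne_zero_iff.mpr h0)]
      have h1 : ‖(T.val u : H)‖ ≤ restrictedNorm E i T.val :=
        le_csSup (hbddim i) ⟨u, ⟨hu1, hun⟩, rfl⟩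
      have h2 : restrictedNorm E i T.val ≤ sSup NS := le_csSup hbddNS ⟨i, rfl⟩
      have hTu : (T.val u : H) = (‖z‖⁻¹ : ℂ) • (T.val x : H) := by
        rw [hu, map_smul]; rfl
      have hnormTu : ‖(T.val u : H)‖ = ‖z‖⁻¹ * ‖(T.val x : H)‖ := by
        rw [hTu, norm_smul, norm_inv, Complex.norm_real, norm_norm]
      have hzx : Φ T z = (T.val x : H) := hΦ T x
      calc ‖Φ T z‖ = ‖(T.val x : H)‖ := by rw [hzx]
        _ = ‖z‖ * ‖(T.val u : H)‖ := by
            rw [hnormTu, ← mul_assoc, mul_inv_cancel₀ (norm_ne_zero_iff.mpr h0), one_mul]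
        _ ≤ ‖z‖ * sSup NS :=
            mul_le_mul_of_nonneg_left (h1.trans h2) (norm_nonneg _)
        _ = sSup NS * ‖z‖ := mul_comm _ _
  · -- additivity
    intro T S U hU
    apply hext
    intro x
    calc Φ U (x : H) = (U.val x : H) := hΦ U x
      _ = ((T.val + S.val) x : H) := by rw [hU]
      _ = (T.val x : H) + (S.val x : H) := rfl
      _ = Φ T (x : H) + Φ S (x : H) := by rw [hΦ T x, hΦ S x]
      _ = (Φ T + Φ S) (x : H) := rfl
  · -- smul
    intro c T U hU
    apply hext
    intro x
    calc Φ U (x : H) = (U.val x : H) := hΦ U x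
      _ = ((c • T.val) x : H) := by rw [hU]
      _ = c • (T.val x : H) := rfl
      _ = c • (Φ T (x : H)) := by rw [hΦ T x]
      _ = (c • Φ T) (x : H) := rfl
  · -- multiplicativity
    intro T S U hU
    apply hext
    intro x
    calc Φ U (x : H) = (U.val x : H) := hΦ U x
      _ = ((T.val ∘ₗ S.val) x : H) := by rw [hU]
      _ = (T.val (S.val x) : H) := rfl
      _ = Φ T ((S.val x : H)) := (hΦ T (S.val x)).symm
      _ = Φ T (Φ S (x : H)) := by rw [hΦ S x]
      _ = ((Φ T).comp (Φ S)) (x : H) := rfl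
  · -- adjoint
    intro T S hTS
    rw [ContinuousLinearMap.eq_adjoint_iff]
    have key : ∀ x y : ↥(⨆ i, E i),
        (inner ℂ (Φ S (x : H)) ((y : H)) : ℂ) = inner ℂ ((x : H)) (Φ T (y : H)) := by
      intro x y
      rw [hΦ S x, hΦ T y]
      have := hTS y x
      calc (inner ℂ ((S.val x : H)) ((y : H)) : ℂ)
          = starRingEnd ℂ (inner ℂ ((y : H)) ((S.val x : H))) := (inner_conj_symm _ _).symm
        _ = starRingEnd ℂ (inner ℂ ((T.val y : H)) ((x : H))) := by rw [← this]
        _ = inner ℂ ((x : H)) ((T.val y : H)) := inner_conj_symm _ _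
    have step1 : ∀ (y : ↥(⨆ i, E i)) (x : H),
        (inner ℂ (Φ S x) ((y : H)) : ℂ) = inner ℂ x (Φ T (y : H)) := by
      intro y x
      have hcl : IsClosed {x : H | (inner ℂ (Φ S x) ((y : H)) : ℂ) = inner ℂ x (Φ T (y : H))} :=
        isClosed_eq ((Φ S).continuous.inner continuous_const)
          (continuous_id.inner continuous_const)
      refine hcl.closure_subset_iff.mpr ?_ (hDdense x)
      intro z hz
      exact key ⟨z, hz⟩ y
    intro x y
    have hcl : IsClosed {y : H | (inner ℂ (Φ S x) y : ℂ) = inner ℂ x (Φ T y)} :=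
      isClosed_eq (continuous_const.inner continuous_id)
        (continuous_const.inner (Φ T).continuous)
    refine hcl.closure_subset_iff.mpr ?_ (hDdense y)
    intro z hz
    exact step1 ⟨z, hz⟩ x

end
end

section
/- Let 𝒜 be a unital locally C*-algebra, {ℋ; ℰ = {ℋ_n}_n; 𝒟_ℰ} a quantized Fréchet domain in a Hilbert space ℋ, P_n the projection onto ℋ_n, S_1 = P_1 and S_n = (id_ℋ − P_{n−1})P_n for n ≥ 2, and let ψ_n : 𝒜 → B(ℋ), n ≥ 1, be local completely positive maps (with respect to the trivial quantized domain {ℋ}). Then the formula φ̃(a) = Σ_{n=1}^∞ S_n ψ_n(a) S_n (which on each ℋ_n reduces to the finite sum Σ_{k≤n} S_k ψ_k(a) S_k) defines a well-defined linear map φ̃ : 𝒜 → C*(𝒟_ℰ), and φ̃ is a local completely positive map. -/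
open scoped ComplexOrder

noncomputable section

/-- The projections `S_1 = P_1`, `S_n = (id - P_{n-1}) P_n` (`n ≥ 2`) onto
`ℋ_{n-1}^⊥ ∩ ℋ_n` (with `0`-based indexing: `Sproj 0 = P_0`,
`Sproj (n+1) = P_{n+1} - P_n`). -/
def Sproj {H : Type*} [NormedAddCommGroup H] [InnerProductSpace ℂ H] [CompleteSpace H]
    (E : ℕ → Submodule ℂ H) (hcl : ∀ n, IsClosed (E n : Set H)) : ℕ → (H →L[ℂ] H)
  | 0 => projCL (E 0) (hcl 0)
  | n + 1 => projCL (E (n + 1)) (hcl (n + 1)) - projCL (E n) (hcl n)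

/-! ### Auxiliary lemmas for Statement 9 -/

section S9Aux

variable {H : Type*} [NormedAddCommGroup H] [InnerProductSpace ℂ H] [CompleteSpace H]

theorem projCL_inner {K : Submodule ℂ H} (hK : IsClosed (K : Set H)) (x y : H) :
    (inner ℂ (projCL K hK x) y : ℂ) = inner ℂ x (projCL K hK y) := by
  haveI : CompleteSpace K := hK.completeSpace_coe
  exact K.inner_starProjection_left_eq_right x y

theorem projCL_sub_mem {K : Submodule ℂ H} (hK : IsClosed (K : Set H)) (x : H) :
    x - projCL K hK x ∈ Kᗮ := by
  haveI : CompleteSpace K := hK.completeSpace_coe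
  exact K.sub_starProjection_mem_orthogonal x

variable {E : ℕ → Submodule ℂ H} (hcl : ∀ n, IsClosed (E n : Set H)) (hmono : Monotone E)

include hmono
set_option linter.unusedSectionVars false

theorem Sproj_mem (m : ℕ) (y : H) : Sproj E hcl m y ∈ E m := by
  cases m with
  | zero => exact projCL_mem (E 0) (hcl 0) y
  | succ k =>
    show projCL (E (k + 1)) (hcl (k + 1)) y - projCL (E k) (hcl k) y ∈ E (k + 1)
    exact sub_mem (projCL_mem _ _ _) (hmono (Nat.le_succ k) (projCL_mem _ _ _))

theorem Sproj_eq_zero_of_mem {n m : ℕ} (h : n < m) {x : H} (hx : x ∈ E n) :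
    Sproj E hcl m x = 0 := by
  cases m with
  | zero => omega
  | succ k =>
    show projCL (E (k + 1)) (hcl (k + 1)) x - projCL (E k) (hcl k) x = 0
    rw [projCL_eq_self _ (hmono (by omega : n ≤ k + 1) hx),
      projCL_eq_self _ (hmono (by omega : n ≤ k) hx), sub_self]

theorem Sproj_eq_zero_of_orth {i m : ℕ} (h : m ≤ i) {x : H} (hx : x ∈ (E i)ᗮ) :
    Sproj E hcl m x = 0 := by
  cases m with
  | zero => exact projCL_eq_zero (hcl 0) (Submodule.orthogonal_le (hmono (Nat.zero_le i)) hx)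
  | succ k =>
    show projCL (E (k + 1)) (hcl (k + 1)) x - projCL (E k) (hcl k) x = 0
    rw [projCL_eq_zero _ (Submodule.orthogonal_le (hmono h) hx),
      projCL_eq_zero _ (Submodule.orthogonal_le (hmono (by omega : k ≤ i)) hx), sub_self]

theorem Sproj_mem_orth {i m : ℕ} (h : i < m) (y : H) : Sproj E hcl m y ∈ (E i)ᗮ := by
  cases m with
  | zero => omega
  | succ k =>
    show projCL (E (k + 1)) (hcl (k + 1)) y - projCL (E k) (hcl k) y ∈ (E i)ᗮ
    refine Submodule.orthogonal_le (hmono (by omega : i ≤ k)) ?_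
    have hPk : projCL (E k) (hcl k) y = projCL (E k) (hcl k) (projCL (E (k+1)) (hcl (k+1)) y) := by
      have h0 : projCL (E k) (hcl k) (y - projCL (E (k+1)) (hcl (k+1)) y) = 0 :=
        projCL_eq_zero _ (Submodule.orthogonal_le (hmono (Nat.le_succ k))
          (projCL_sub_mem _ y))
    
      rw [map_sub, sub_eq_zero] at h0
      exact h0
    rw [hPk]
    exact projCL_sub_mem _ _

omit hmono in
theorem Sproj_inner (m : ℕ) (x y : H) :
    (inner ℂ (Sproj E hcl m x) y : ℂ) = inner ℂ x (Sproj E hcl m y) := by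
  cases m with
  | zero => exact projCL_inner (hcl 0) x y
  | succ k =>
    show (inner ℂ (projCL (E (k+1)) (hcl (k+1)) x - projCL (E k) (hcl k) x) y : ℂ) =
      inner ℂ x (projCL (E (k+1)) (hcl (k+1)) y - projCL (E k) (hcl k) y)
    rw [inner_sub_left, inner_sub_right, projCL_inner, projCL_inner]

variable {A : Type*} [Ring A] [StarRing A] [Algebra ℂ A]

omit hmono in
/-- The finite-sum value `Σ_{m ≤ n} S_m ψ_m(a) S_m x`. -/
def valFun (E : ℕ → Submodule ℂ H) (hcl : ∀ n, IsClosed (E n : Set H))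
    (ψ : ℕ → (A →ₗ[ℂ] (H →L[ℂ] H))) (a : A) (x : H) (n : ℕ) : H :=
  ∑ m ∈ Finset.range (n + 1), Sproj E hcl m (ψ m a (Sproj E hcl m x))

variable (ψ : ℕ → (A →ₗ[ℂ] (H →L[ℂ] H)))

theorem valFun_mem (a : A) (x : H) (n : ℕ) : valFun E hcl ψ a x n ∈ E n :=
  Submodule.sum_mem _ fun m hm =>
    hmono (Nat.lt_succ_iff.mp (Finset.mem_range.mp hm)) (Sproj_mem hcl hmono m _)

theorem valFun_stable (a : A) {x : H} {n n' : ℕ} (hx : x ∈ E n) (hnn : n ≤ n') :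
    valFun E hcl ψ a x n' = valFun E hcl ψ a x n := by
  refine (Finset.sum_subset (by simpa using Nat.succ_le_succ hnn) ?_).symm
  intro m _ hm
  have h2 : n < m := by simp only [Finset.mem_range] at hm; omega
  rw [Sproj_eq_zero_of_mem hcl hmono h2 hx, map_zero, map_zero]

theorem valFun_welldef (a : A) {x : H} {n₁ n₂ : ℕ} (h₁ : x ∈ E n₁) (h₂ : x ∈ E n₂) :
    valFun E hcl ψ a x n₁ = valFun E hcl ψ a x n₂ := by
  rw [← valFun_stable hcl hmono ψ a h₁ (le_max_left n₁ n₂),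
    ← valFun_stable hcl hmono ψ a h₂ (le_max_right n₁ n₂)]

omit hmono in
omit [StarRing A] in
theorem valFun_add_x (a : A) (x y : H) (n : ℕ) :
    valFun E hcl ψ a (x + y) n = valFun E hcl ψ a x n + valFun E hcl ψ a y n := by
  simp [valFun, map_add, Finset.sum_add_distrib]

omit hmono in
omit [StarRing A] in
theorem valFun_smul_x (a : A) (c : ℂ) (x : H) (n : ℕ) :
    valFun E hcl ψ a (c • x) n = c • valFun E hcl ψ a x n := by
  simp [valFun, map_smul, Finset.smul_sum]

omit hmono in
omit [StarRing A] in
theorem valFun_add_a (a b : A) (x : H) (n : ℕ) :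
    valFun E hcl ψ (a + b) x n = valFun E hcl ψ a x n + valFun E hcl ψ b x n := by
  simp [valFun, map_add, ContinuousLinearMap.add_apply, Finset.sum_add_distrib]

omit hmono in
omit [StarRing A] in
theorem valFun_smul_a (c : ℂ) (a : A) (x : H) (n : ℕ) :
    valFun E hcl ψ (c • a) x n = c • valFun E hcl ψ a x n := by
  simp [valFun, map_smul, ContinuousLinearMap.smul_apply, Finset.smul_sum]

end S9Aux
section PhiMap

set_option linter.unusedSectionVars false

variable {H : Type*} [NormedAddCommGroup H] [InnerProductSpace ℂ H] [CompleteSpace H]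
variable {A : Type*} [Ring A] [StarRing A] [Algebra ℂ A]

/-- An index `n` with `x ∈ ℋ_n`, for `x ∈ 𝒟_ℰ`. -/
def idxN (E : ℕ → Submodule ℂ H) (hmono : Monotone E) (x : ↥(⨆ n, E n)) : ℕ :=
  ((Submodule.mem_iSup_of_directed E hmono.directed_le).mp x.2).choose

theorem idxN_mem (E : ℕ → Submodule ℂ H) (hmono : Monotone E) (x : ↥(⨆ n, E n)) :
    (x : H) ∈ E (idxN E hmono x) :=
  ((Submodule.mem_iSup_of_directed E hmono.directed_le).mp x.2).choose_spec

/-- The map `φ̃`: `φ̃(a) x = Σ_{m ≤ n} S_m ψ_m(a) S_m x` for `x ∈ ℋ_n`. -/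
def phiMap (E : ℕ → Submodule ℂ H) (hcl : ∀ n, IsClosed (E n : Set H)) (hmono : Monotone E)
    (ψ : ℕ → (A →ₗ[ℂ] (H →L[ℂ] H))) : A →ₗ[ℂ] (↥(⨆ n, E n) →ₗ[ℂ] ↥(⨆ n, E n)) where
  toFun a :=
    { toFun := fun x => ⟨valFun E hcl ψ a (x : H) (idxN E hmono x),
        le_iSup E _ (valFun_mem hcl hmono ψ a (x : H) _)⟩
      map_add' := fun x y => Subtype.ext <| by
        have hx : (x : H) ∈ E (max (idxN E hmono x) (idxN E hmono y)) :=
          hmono (le_max_left _ _) (idxN_mem E hmono x)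
        have hy : (y : H) ∈ E (max (idxN E hmono x) (idxN E hmono y)) :=
          hmono (le_max_right _ _) (idxN_mem E hmono y)
        exact (valFun_welldef hcl hmono ψ a (idxN_mem E hmono (x + y)) (add_mem hx hy)).trans
          ((valFun_add_x hcl ψ a (x : H) (y : H) _).trans
            (congrArg₂ (· + ·) (valFun_welldef hcl hmono ψ a hx (idxN_mem E hmono x))
              (valFun_welldef hcl hmono ψ a hy (idxN_mem E hmono y))))
      map_smul' := fun cc x => Subtype.ext <|
        (valFun_welldef hcl hmono ψ a (idxN_mem E hmono (cc • x))
            (Submodule.smul_mem _ cc (idxN_mem E hmono x))).trans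
          (valFun_smul_x hcl ψ a cc (x : H) _) }
  map_add' a b := LinearMap.ext fun x => Subtype.ext (valFun_add_a hcl ψ a b (x : H) _)
  map_smul' cc a := LinearMap.ext fun x => Subtype.ext (valFun_smul_a hcl ψ cc a (x : H) _)

theorem phiMap_coe {E : ℕ → Submodule ℂ H} (hcl : ∀ n, IsClosed (E n : Set H))
    (hmono : Monotone E) (ψ : ℕ → (A →ₗ[ℂ] (H →L[ℂ] H))) (a : A) (x : ↥(⨆ n, E n)) {n : ℕ}
    (hx : (x : H) ∈ E n) :
    ((phiMap E hcl hmono ψ a) x : H) = valFun E hcl ψ a (x : H) n :=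
  valFun_welldef hcl hmono ψ a (idxN_mem E hmono x) hx

theorem phiMap_apply {E : ℕ → Submodule ℂ H} (hcl : ∀ n, IsClosed (E n : Set H))
    (hmono : Monotone E) (ψ : ℕ → (A →ₗ[ℂ] (H →L[ℂ] H))) (a : A) (n : ℕ) (x : H)
    (hx : x ∈ E n) :
    ((phiMap E hcl hmono ψ a) (inclE E n x hx) : H) = valFun E hcl ψ a x n :=
  valFun_welldef hcl hmono ψ a (idxN_mem E hmono _) hx

end PhiMap
/-! ## Statement 9

Let `{ℋ_n}_n` be a quantized Fréchet domain and `ψ_n : 𝒜 → B(ℋ)` local completely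
positive maps (w.r.t. the trivial quantized domain `{ℋ}`).  Then
`φ̃(a) = Σ_n S_n ψ_n(a) S_n` — which on each `ℋ_n` reduces to the finite sum
`Σ_{k ≤ n} S_k ψ_k(a) S_k` — defines a linear map `φ̃ : 𝒜 → C*(𝒟_ℰ)`, and `φ̃` is a local
completely positive map. -/
theorem statement_9 {A : Type*} {Λ : Type*} [Ring A] [StarRing A] [Algebra ℂ A]
    [StarModule ℂ A] [Nonempty Λ] [UniformSpace A] [IsUniformAddGroup A] {p : Λ → A → ℝ}
    (hA : IsLocallyCStarAlgebra p)
    {pk : ∀ k : ℕ, Λ → Matrix (Fin k) (Fin k) A → ℝ}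
    (hpk : IsMatrixCStarSeminormFamily p pk)
    {H : Type*} [NormedAddCommGroup H] [InnerProductSpace ℂ H] [CompleteSpace H]
    {E : ℕ → Submodule ℂ H} (hE : IsQuantizedFrechetDomain E)
    (ψ : ℕ → (A →ₗ[ℂ] (H →L[ℂ] H))) (hψ : ∀ m, IsLocalCPB pk (ψ m)) :
    ∃ φt : A →ₗ[ℂ] (↥(⨆ n, E n) →ₗ[ℂ] ↥(⨆ n, E n)),
      (∀ a, MemCStar E (φt a)) ∧
      (∀ (a : A) (n : ℕ) (x : H) (hx : x ∈ E n),
        (φt a (inclE E n x hx) : H) =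
          ∑ m ∈ Finset.range (n + 1), Sproj E hE.closed m (ψ m a (Sproj E hE.closed m x))) ∧
      IsLocalCP pk E φt := by
  classical
  refine ⟨phiMap E hE.closed hE.mono ψ, ?_, ?_, ?_⟩
  · -- membership in C*(𝒟_ℰ)
    intro a i
    refine ⟨?_, ?_, ?_⟩
    · intro x hx
      rw [phiMap_coe hE.closed hE.mono ψ a x hx]
      exact valFun_mem hE.closed hE.mono ψ a _ i
    · intro x hx
      obtain ⟨n0, hn0⟩ := (Submodule.mem_iSup_of_directed E hE.mono.directed_le).mp x.2
      rw [phiMap_coe hE.closed hE.mono ψ a x hn0]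
      simp only [valFun]
      refine Submodule.sum_mem _ fun m _ => ?_
      rcases le_or_gt m i with h | h
      · rw [Sproj_eq_zero_of_orth hE.closed hE.mono h hx, map_zero, map_zero]
        exact zero_mem _
      · exact Sproj_mem_orth hE.closed hE.mono h _
    · refine ⟨∑ m ∈ Finset.range (i + 1),
        ‖Sproj E hE.closed m‖ * (‖ψ m a‖ * ‖Sproj E hE.closed m‖), ?_⟩
      intro x hx
      rw [phiMap_coe hE.closed hE.mono ψ a x hx]
      simp only [valFun]
      refine le_trans (norm_sum_le _ _) ?_
      rw [Finset.sum_mul]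
      refine Finset.sum_le_sum fun m _ => ?_
      calc ‖Sproj E hE.closed m (ψ m a (Sproj E hE.closed m (x : H)))‖
          ≤ ‖Sproj E hE.closed m‖ * ‖ψ m a (Sproj E hE.closed m (x : H))‖ :=
            (Sproj E hE.closed m).le_opNorm _
        _ ≤ ‖Sproj E hE.closed m‖ * (‖ψ m a‖ * ‖Sproj E hE.closed m (x : H)‖) :=
            mul_le_mul_of_nonneg_left ((ψ m a).le_opNorm _) (norm_nonneg _)
        _ ≤ ‖Sproj E hE.closed m‖ * (‖ψ m a‖ * (‖Sproj E hE.closed m‖ * ‖(x : H)‖)) :=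
            mul_le_mul_of_nonneg_left (mul_le_mul_of_nonneg_left
              ((Sproj E hE.closed m).le_opNorm _) (norm_nonneg _)) (norm_nonneg _)
        _ = ‖Sproj E hE.closed m‖ * (‖ψ m a‖ * ‖Sproj E hE.closed m‖) * ‖(x : H)‖ := by ring
  · -- the explicit formula on each ℋ_n
    intro a n x hx
    rw [phiMap_apply hE.closed hE.mono ψ a n x hx]
    simp only [valFun]
  · -- local complete positivity
    choose L hL using hψ
    have hLsup : ∀ nn : ℕ, ∃ l, ∀ m, m ≤ nn → ∀ b, p (L m) b ≤ p l b := by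
      intro nn
      induction nn with
      | zero =>
        refine ⟨L 0, fun m hm b => ?_⟩
        obtain rfl := Nat.le_zero.mp hm
        exact le_rfl
      | succ j ih =>
        obtain ⟨l, hl⟩ := ih
        obtain ⟨l', h1, h2⟩ := hA.directed l (L (j + 1))
        refine ⟨l', fun m hm b => ?_⟩
        rcases eq_or_lt_of_le hm with h | h
        · rw [h]; exact h2 b
        · exact (hl m (Nat.lt_succ_iff.mp h) b).trans (h1 b)
    intro n
    obtain ⟨l, hl⟩ := hLsup n
    have htrans : ∀ m, m ≤ n → ∀ (k : ℕ) (c : Matrix (Fin k) (Fin k) A),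
        pk k l c = 0 → pk k (L m) c = 0 := by
      intro m hm k c hc
      rw [hpk.ker] at hc ⊢
      intro i j
      have h1 := hl m hm (c i j)
      have h2 := (hA.cstarSeminorm (L m)).nonneg (c i j)
      rw [hc i j] at h1
      linarith
    refine ⟨l, fun k M => ⟨?_, ?_⟩⟩
    · intro hMpos ξ hξ
      obtain ⟨b, c, hc, hMeq⟩ := hMpos
      have hterm : ∀ i j : Fin k,
          (inner ℂ (ξ i)
            ((phiMap E hE.closed hE.mono ψ (M i j) (inclE E n (ξ j) (hξ j)) : H)) : ℂ)
          = ∑ m ∈ Finset.range (n + 1),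
              (inner ℂ (Sproj E hE.closed m (ξ i))
                (ψ m (M i j) (Sproj E hE.closed m (ξ j))) : ℂ) := by
        intro i j
        rw [phiMap_apply hE.closed hE.mono ψ (M i j) n (ξ j) (hξ j)]
        simp only [valFun]
        rw [inner_sum]
        exact Finset.sum_congr rfl fun m _ => (Sproj_inner hE.closed m (ξ i) _).symm
      calc (0 : ℂ)
          ≤ ∑ m ∈ Finset.range (n + 1), ∑ i, ∑ j,
              (inner ℂ (Sproj E hE.closed m (ξ i))
                (ψ m (M i j) (Sproj E hE.closed m (ξ j))) : ℂ) := by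
            refine Finset.sum_nonneg fun m hm => ?_
            exact (hL m k M).1
              ⟨b, c, htrans m (Nat.lt_succ_iff.mp (Finset.mem_range.mp hm)) k c hc, hMeq⟩
              fun i => Sproj E hE.closed m (ξ i)
        _ = ∑ i, ∑ m ∈ Finset.range (n + 1), ∑ j,
              (inner ℂ (Sproj E hE.closed m (ξ i))
                (ψ m (M i j) (Sproj E hE.closed m (ξ j))) : ℂ) := Finset.sum_comm
        _ = ∑ i, ∑ j, ∑ m ∈ Finset.range (n + 1),
              (inner ℂ (Sproj E hE.closed m (ξ i))
                (ψ m (M i j) (Sproj E hE.closed m (ξ j))) : ℂ) :=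
            Finset.sum_congr rfl fun i _ => Finset.sum_comm
        _ = ∑ i, ∑ j, (inner ℂ (ξ i)
              ((phiMap E hE.closed hE.mono ψ (M i j) (inclE E n (ξ j) (hξ j)) : H)) : ℂ) :=
            Finset.sum_congr rfl fun i _ => Finset.sum_congr rfl fun j _ => (hterm i j).symm
    · intro hM0 i j x hx
      rw [phiMap_apply hE.closed hE.mono ψ (M i j) n x hx]
      simp only [valFun]
      refine Finset.sum_eq_zero fun m hm => ?_
      rw [(hL m k M).2
          (htrans m (Nat.lt_succ_iff.mp (Finset.mem_range.mp hm)) k M hM0) i j,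
        ContinuousLinearMap.zero_apply, map_zero]

end
end
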